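/- arXiv:2003.05912 — 3 statements merged into one kernel-verified Lean document; each statement's English description precedes it below -/
import Mathlib

section
/- (Theorem 1, Part 2) Suppose F is mixed-monotone with respect to a decomposition function d, and let (a, â) : [0, ∞) → ℝⁿ × ℝⁿ be a solution of the deterministic embedding ODE (ȧ, ȧ̂) = e(a, â) with a(0) ⪯ â(0) and 0 ⪯_SE e(a(0), â(0)). Then the limits x_eq := lim_{t→∞} a(t) and x̂_eq := lim_{t→∞} â(t) exist in ℝⁿ and satisfy e(x_eq, x̂_eq) = 0, i.e., (x_eq, x̂_eq) is an equilibrium of the deterministic embedding system; moreover a(0) ⪯ x_eq ⪯ x̂_eq ⪯ â(0). -/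
open Set Function Filter Topology

/-- A function is piecewise continuous on a set `s` if it is continuous on `s` off of
finitely many points. -/
def PiecewiseContinuousOn {α : Type*} [TopologicalSpace α] (w : ℝ → α) (s : Set ℝ) : Prop :=
  ∃ E : Finset ℝ, ContinuousOn w (s \ (E : Set ℝ))

/-- `d` is a decomposition function for the vector field `F` on state space `ℝⁿ` with
disturbance set `𝒲 = Set.Icc wl wu ⊆ ℝᵐ`:  `d` is locally Lipschitz, agrees with `F` on the
diagonal, `dᵢ` is nondecreasing in `xⱼ` for `j ≠ i`, nonincreasing in every component of `x̂`,
nondecreasing in every component of `w` and nonincreasing in every component of `ŵ`. -/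
def IsDecompositionFunction {n m : ℕ} (wl wu : Fin m → ℝ)
    (F : (Fin n → ℝ) → (Fin m → ℝ) → (Fin n → ℝ))
    (d : (Fin n → ℝ) → (Fin m → ℝ) → (Fin n → ℝ) → (Fin m → ℝ) → (Fin n → ℝ)) : Prop :=
  LocallyLipschitz
      (fun p : ((Fin n → ℝ) × (Fin m → ℝ)) × ((Fin n → ℝ) × (Fin m → ℝ)) =>
        d p.1.1 p.1.2 p.2.1 p.2.2)
    ∧ (∀ x : Fin n → ℝ, ∀ w ∈ Set.Icc wl wu, d x w x w = F x w)
    ∧ (∀ (i j : Fin n), j ≠ i → ∀ (x xh : Fin n → ℝ) (s t : ℝ), s ≤ t →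
        ∀ w ∈ Set.Icc wl wu, ∀ wh ∈ Set.Icc wl wu,
          d (Function.update x j s) w xh wh i ≤ d (Function.update x j t) w xh wh i)
    ∧ (∀ (i j : Fin n) (x xh : Fin n → ℝ) (s t : ℝ), s ≤ t →
        ∀ w ∈ Set.Icc wl wu, ∀ wh ∈ Set.Icc wl wu,
          d x w (Function.update xh j t) wh i ≤ d x w (Function.update xh j s) wh i)
    ∧ (∀ (i : Fin n) (k : Fin m) (x xh : Fin n → ℝ) (s t : ℝ),
        wl k ≤ s → s ≤ t → t ≤ wu k →
        ∀ w ∈ Set.Icc wl wu, ∀ wh ∈ Set.Icc wl wu,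
          d x (Function.update w k s) xh wh i ≤ d x (Function.update w k t) xh wh i)
    ∧ (∀ (i : Fin n) (k : Fin m) (x xh : Fin n → ℝ) (s t : ℝ),
        wl k ≤ s → s ≤ t → t ≤ wu k →
        ∀ w ∈ Set.Icc wl wu, ∀ wh ∈ Set.Icc wl wu,
          d x w xh (Function.update wh k t) i ≤ d x w xh (Function.update wh k s) i)

section AuxLemmas

open Metric

/-- A locally Lipschitz map is Lipschitz (with a real constant) on every compact set. -/
lemma LocallyLipschitz.exists_bound_isCompact {X Y : Type*} [MetricSpace X] [MetricSpace Y]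
    {f : X → Y} (hf : LocallyLipschitz f) {s : Set X} (hs : IsCompact s) :
    ∃ L : ℝ, 0 ≤ L ∧ ∀ p ∈ s, ∀ q ∈ s, dist (f p) (f q) ≤ L * dist p q := by
  rcases s.eq_empty_or_nonempty with rfl | ⟨x₀, hx₀⟩
  · exact ⟨0, le_refl _, by simp⟩
  have hfc : Continuous f := hf.continuous
  choose K t ht hl using hf
  have hball : ∀ x, ∃ r > 0, ball x r ⊆ t x := fun x => Metric.mem_nhds_iff.1 (ht x)
  choose r hr hsub using hball
  obtain ⟨F, hFs, hFcov⟩ := hs.elim_nhds_subcover (fun x => ball x (r x))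
    (fun x _ => ball_mem_nhds x (hr x))
  obtain ⟨δ, hδ, hleb⟩ := lebesgue_number_lemma_of_metric (ι := F)
    (c := fun i : F => ball (i : X) (r (i : X))) hs
    (fun i => isOpen_ball) (by
      intro x hx
      rcases Set.mem_iUnion₂.1 (hFcov hx) with ⟨c, hc, hxc⟩
      exact Set.mem_iUnion.2 ⟨⟨c, hc⟩, hxc⟩)
  obtain ⟨C, hC⟩ := Metric.isBounded_iff.1 (hs.image hfc).isBounded
  have hC0 : 0 ≤ C := le_trans dist_nonneg (hC ⟨x₀, hx₀, rfl⟩ ⟨x₀, hx₀, rfl⟩)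
  set K0 : NNReal := F.sup K with hK0
  refine ⟨max (K0 : ℝ) (C / δ), le_trans (NNReal.coe_nonneg K0) (le_max_left _ _), ?_⟩
  intro p hp q hq
  rcases lt_or_ge (dist p q) δ with hd | hd
  · obtain ⟨i, hi⟩ := hleb p hp
    have hpq : q ∈ t i := hsub _ (hi (by rw [mem_ball, dist_comm]; exact hd))
    have hpp : p ∈ t i := hsub _ (hi (mem_ball_self hδ))
    calc dist (f p) (f q) ≤ (K i : ℝ) * dist p q := (hl i).dist_le_mul p hpp q hpq
      _ ≤ max (K0 : ℝ) (C / δ) * dist p q := by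
          apply mul_le_mul_of_nonneg_right _ dist_nonneg
          exact le_trans (NNReal.coe_le_coe.2 (Finset.le_sup i.2)) (le_max_left _ _)
  · have h1 : dist (f p) (f q) ≤ C := hC ⟨p, hp, rfl⟩ ⟨q, hq, rfl⟩
    calc dist (f p) (f q) ≤ (C / δ) * dist p q := by
          rw [div_mul_eq_mul_div, le_div_iff₀ hδ]
          calc dist (f p) (f q) * δ ≤ C * δ := mul_le_mul_of_nonneg_right h1 (le_of_lt hδ)
            _ ≤ C * dist p q := mul_le_mul_of_nonneg_left hd hC0
      _ ≤ max (K0 : ℝ) (C / δ) * dist p q :=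
          mul_le_mul_of_nonneg_right (le_max_right _ _) dist_nonneg

/-- Grönwall-type lemma: a continuous function with `f 0 ≤ 0` satisfying the
one-sided eventual slope estimate stays `≤ 0`. -/
lemma gronwall_zero {f : ℝ → ℝ} {K b : ℝ}
    (hf : ContinuousOn f (Icc 0 b)) (h0 : f 0 ≤ 0)
    (hev : ∀ x ∈ Ico (0:ℝ) b, ∀ ε > 0, ∀ᶠ z in 𝓝[>] x, f z - f x ≤ (z - x) * (K * f x + ε)) :
    ∀ x ∈ Icc (0:ℝ) b, f x ≤ 0 := by
  intro x hx
  have := le_gronwallBound_of_liminf_deriv_right_le (f := f) (f' := fun x => K * f x)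
    (δ := 0) (K := K) (ε := 0) (a := 0) (b := b) hf ?_ h0 (fun x _ => by simp) x hx
  · simpa [gronwallBound_ε0_δ0] using this
  · intro y hy r hr
    have hr' : K * f y < r := hr
    have hev' := hev y hy ((r - K * f y)/2) (by linarith)
    apply Eventually.frequently
    filter_upwards [hev', self_mem_nhdsWithin] with z hz (hz' : y < z)
    have hzy : 0 < z - y := by linarith
    have h1 : (z - y)⁻¹ * (f z - f y) ≤ K * f y + (r - K * f y)/2 :=
      (inv_mul_le_iff₀ hzy).2 (by linarith [hz])
    linarith

/-- Chain monotonicity through coordinatewise `Function.update` monotonicity. -/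
lemma chain_mono {n : ℕ} (g : (Fin n → ℝ) → ℝ) (lo hi : Fin n → ℝ) (A : Set (Fin n))
    (h : ∀ j ∈ A, ∀ x : Fin n → ℝ, (∀ k, lo k ≤ x k) → (∀ k, x k ≤ hi k) →
      ∀ s t : ℝ, lo j ≤ s → s ≤ t → t ≤ hi j →
        g (Function.update x j s) ≤ g (Function.update x j t)) :
    ∀ x y : Fin n → ℝ, (∀ k, lo k ≤ x k) → (∀ k, x k ≤ y k) → (∀ k, y k ≤ hi k) →
      (∀ j, x j ≠ y j → j ∈ A) → g x ≤ g y := by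
  suffices H : ∀ s : Finset (Fin n), ∀ x y : Fin n → ℝ,
      (∀ k, lo k ≤ x k) → (∀ k, x k ≤ y k) → (∀ k, y k ≤ hi k) →
      (∀ j, x j ≠ y j → j ∈ A ∧ j ∈ s) → g x ≤ g y by
    intro x y h1 h2 h3 h4
    exact H Finset.univ x y h1 h2 h3 (fun j hj => ⟨h4 j hj, Finset.mem_univ j⟩)
  intro s
  induction s using Finset.induction_on with
  | empty =>
    intro x y _ _ _ h4
    have : x = y := funext fun j => by
      by_contra hc; exact absurd (h4 j hc).2 (Finset.notMem_empty j)
    rw [this]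
  | insert c s' ha ih =>
    intro x y h1 h2 h3 h4
    by_cases hxc : x c = y c
    · refine ih x y h1 h2 h3 (fun j hj => ⟨(h4 j hj).1, ?_⟩)
      rcases Finset.mem_insert.1 (h4 j hj).2 with rfl | hmem
      · exact absurd hxc hj
      · exact hmem
    · set x' := Function.update x c (y c) with hx'
      have hgle : g x ≤ g x' := by
        have := h c (h4 c hxc).1 x h1 (fun k => le_trans (h2 k) (h3 k))
          (x c) (y c) (h1 c) (h2 c) (h3 c)
        simpa [Function.update_eq_self] using this
      refine le_trans hgle (ih x' y ?_ ?_ h3 ?_)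
      · intro k
        rcases eq_or_ne k c with rfl | hk
        · simp [hx', le_trans (h1 k) (h2 k)]
        · simp [hx', Function.update_of_ne hk, h1 k]
      · intro k
        rcases eq_or_ne k c with rfl | hk
        · simp [hx']
        · simp [hx', Function.update_of_ne hk, h2 k]
      · intro j hj
        have hjc : j ≠ c := by
          intro hc; subst hc; simp [hx'] at hj
        rw [hx', Function.update_of_ne hjc] at hj
        rcases Finset.mem_insert.1 (h4 j hj).2 with h | h
        · exact absurd h hjc
        · exact ⟨(h4 j hj).1, h⟩

/-- distance of two nested pairs sharing the same second components. -/
lemma dist4 {n m : ℕ} (A A' B B' : Fin n → ℝ) (w w' : Fin m → ℝ) :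
    dist (((A, w), (B, w')) : ((Fin n → ℝ) × (Fin m → ℝ)) × ((Fin n → ℝ) × (Fin m → ℝ)))
      ((A', w), (B', w')) = max (dist A A') (dist B B') := by
  simp [Prod.dist_eq, dist_self, max_eq_left dist_nonneg]

lemma pi_dist_le {n : ℕ} {A B : Fin n → ℝ} {r : ℝ} (hr : 0 ≤ r)
    (h : ∀ j, |A j - B j| ≤ r) : dist A B ≤ r :=
  (dist_pi_le_iff hr).2 fun j => by rw [Real.dist_eq]; exact h j

lemma abs_min_sub_right {α β r : ℝ} (h1 : β - α ≤ r) (h2 : 0 ≤ r) : |min α β - β| ≤ r := by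
  rcases le_total α β with h | h
  · rw [min_eq_left h, abs_of_nonpos (by linarith)]; linarith
  · rw [min_eq_right h]; simpa using h2

lemma abs_max_sub_right {α β r : ℝ} (h1 : α - β ≤ r) (h2 : 0 ≤ r) : |max α β - β| ≤ r := by
  rcases le_total α β with h | h
  · rw [max_eq_right h]; simpa using h2
  · rw [max_eq_left h, abs_of_nonneg (by linarith)]; linarith

lemma growth_of_deriv {g g' : ℝ → ℝ} {T T' c : ℝ} (hTT : T ≤ T')
    (hg : ∀ s ∈ Icc T T', HasDerivAt g (g' s) s) (hc : ∀ s ∈ Icc T T', c ≤ g' s) :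
    g T + c * (T' - T) ≤ g T' := by
  have hmono : MonotoneOn (fun s => g s - c * s) (Icc T T') := by
    apply monotoneOn_of_hasDerivWithinAt_nonneg (convex_Icc T T')
      (f' := fun s => g' s - c)
    · intro s hs
      exact ((hg s hs).continuousAt.continuousWithinAt).sub
        ((continuous_const.mul continuous_id).continuousAt.continuousWithinAt)
    · intro s hs
      have hs' : s ∈ Icc T T' := interior_subset hs
      exact (((hg s hs').sub (((hasDerivAt_id s).const_mul c).congr_deriv
        (by ring))).hasDerivWithinAt)
    · intro s hs
      have hs' : s ∈ Icc T T' := interior_subset hs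
      linarith [hc s hs']
  have := hmono ⟨le_refl T, hTT⟩ ⟨hTT, le_refl T'⟩ hTT
  simp only [] at this
  nlinarith [this]

lemma abs_min_sub_le {α β γ : ℝ} : |min α β - γ| ≤ max |α - γ| |β - γ| := by
  rcases min_cases α β with ⟨h1, _⟩ | ⟨h1, _⟩ <;> rw [h1]
  · exact le_max_left _ _
  · exact le_max_right _ _

lemma abs_max_sub_le {α β γ : ℝ} : |max α β - γ| ≤ max |α - γ| |β - γ| := by
  rcases max_cases α β with ⟨h1, _⟩ | ⟨h1, _⟩ <;> rw [h1]
  · exact le_max_left _ _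
  · exact le_max_right _ _

lemma abs_min_zero_le_of {α r : ℝ} (h : -α ≤ r) (h0 : 0 ≤ r) : |min α 0| ≤ r := by
  rcases le_total α 0 with h1 | h1
  · rw [min_eq_left h1, abs_of_nonpos h1]; linarith
  · rw [min_eq_right h1]; simpa using h0

lemma abs_max_zero_le_of {α r : ℝ} (h : α ≤ r) (h0 : 0 ≤ r) : |max α 0| ≤ r := by
  rcases le_total α 0 with h1 | h1
  · rw [max_eq_right h1]; simpa using h0
  · rw [max_eq_left h1, abs_of_nonneg h1]; linarith

end AuxLemmas

set_option maxHeartbeats 2000000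

/-- Theorem 1, Part 2: a solution of the deterministic embedding ODE started
in `𝒮` converges to a limit `(x_eq, x̂_eq)` which is an equilibrium of the embedding system
(`e(x_eq, x̂_eq) = 0`), and `a(0) ⪯ x_eq ⪯ x̂_eq ⪯ â(0)`. -/
theorem thm1_part2_limit_is_equilibrium
    {n m : ℕ} (wl wu : Fin m → ℝ) (hwlu : wl ≤ wu)
    (F : (Fin n → ℝ) → (Fin m → ℝ) → (Fin n → ℝ))
    (d : (Fin n → ℝ) → (Fin m → ℝ) → (Fin n → ℝ) → (Fin m → ℝ) → (Fin n → ℝ))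
    (hd : IsDecompositionFunction wl wu F d)
    -- (a, ah) solves the deterministic embedding ODE on [0, ∞)
    (a ah : ℝ → (Fin n → ℝ))
    (ha : ∀ t ∈ Set.Ici (0:ℝ), HasDerivAt a (d (a t) wl (ah t) wu) t)
    (hah : ∀ t ∈ Set.Ici (0:ℝ), HasDerivAt ah (d (ah t) wu (a t) wl) t)
    -- (a 0, ah 0) ∈ 𝒮
    (h0tri : a 0 ≤ ah 0)
    (h0SE : (0 : Fin n → ℝ) ≤ d (a 0) wl (ah 0) wu ∧ d (ah 0) wu (a 0) wl ≤ (0 : Fin n → ℝ)) :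
    ∃ xeq xheq : Fin n → ℝ,
      Filter.Tendsto a Filter.atTop (nhds xeq) ∧
      Filter.Tendsto ah Filter.atTop (nhds xheq) ∧
      d xeq wl xheq wu = 0 ∧ d xheq wu xeq wl = 0 ∧
      a 0 ≤ xeq ∧ xeq ≤ xheq ∧ xheq ≤ ah 0 := by
  -- trivial case `n = 0`
  rcases Nat.eq_zero_or_pos n with hn | hn
  · subst hn
    have hss : ∀ x y : Fin 0 → ℝ, x = y := fun x y => Subsingleton.elim x y
    refine ⟨a 0, ah 0, ?_, ?_, hss _ _, hss _ _, le_refl _, h0tri, le_refl _⟩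
    · exact tendsto_const_nhds.congr (fun t => hss _ _)
    · exact tendsto_const_nhds.congr (fun t => hss _ _)
  haveI hne : Nonempty (Fin n) := Fin.pos_iff_nonempty.mp hn
  obtain ⟨hLip, hdiag, hxmono, hxhmono, hwmono, hwhmono⟩ := hd
  have hwlmem : wl ∈ Set.Icc wl wu := ⟨le_refl _, hwlu⟩
  have hwumem : wu ∈ Set.Icc wl wu := ⟨hwlu, le_refl _⟩
  have hdmc : Continuous (fun pq : ((Fin n → ℝ) × (Fin m → ℝ)) × ((Fin n → ℝ) × (Fin m → ℝ)) =>
      d pq.1.1 pq.1.2 pq.2.1 pq.2.2) := hLip.continuous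
  -- M1 : monotone in x off the diagonal
  have M1 : ∀ (i : Fin n) (w wh : Fin m → ℝ), w ∈ Set.Icc wl wu → wh ∈ Set.Icc wl wu →
      ∀ x y xh : Fin n → ℝ, (∀ j, x j ≤ y j) → x i = y i → d x w xh wh i ≤ d y w xh wh i := by
    intro i w wh hw hwh x y xh hxy hii
    refine chain_mono (fun v => d v w xh wh i) x y {j | j ≠ i} ?_ x y
      (fun k => le_refl _) hxy (fun k => le_refl _) ?_
    · intro j hj v _ _ s t _ hst _
      exact hxmono i j hj v xh s t hst w hw wh hwh
    · intro j hj hji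
      exact hj (by rw [hji, hii])
  -- M2 : antitone in xh (all coordinates)
  have M2 : ∀ (i : Fin n) (w wh : Fin m → ℝ), w ∈ Set.Icc wl wu → wh ∈ Set.Icc wl wu →
      ∀ (x xh yh : Fin n → ℝ), (∀ j, xh j ≤ yh j) → d x w yh wh i ≤ d x w xh wh i := by
    intro i w wh hw hwh x xh yh hxy
    have := chain_mono (fun v => -(d x w v wh i)) xh yh Set.univ ?_ xh yh
      (fun k => le_refl _) hxy (fun k => le_refl _) (fun j _ => Set.mem_univ j)
    · simpa using this
    · intro j _ v _ _ s t _ hst _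
      simp only [neg_le_neg_iff]
      exact hxhmono i j x v s t hst w hw wh hwh
  -- M3 : monotone in w
  have M3 : ∀ (i : Fin n) (x xh : Fin n → ℝ) (wh : Fin m → ℝ), wh ∈ Set.Icc wl wu →
      d x wl xh wh i ≤ d x wu xh wh i := by
    intro i x xh wh hwh
    refine chain_mono (fun v => d x v xh wh i) wl wu Set.univ ?_ wl wu
      (fun k => le_refl _) (fun k => hwlu k) (fun k => le_refl _) (fun j _ => Set.mem_univ j)
    intro j _ v hlo hhi s t hs hst ht
    exact hwmono i j x xh s t hs hst ht v ⟨fun k => hlo k, fun k => hhi k⟩ wh hwh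
  -- M4 : antitone in wh
  have M4 : ∀ (i : Fin n) (x xh : Fin n → ℝ) (w : Fin m → ℝ), w ∈ Set.Icc wl wu →
      d x w xh wu i ≤ d x w xh wl i := by
    intro i x xh w hw
    have := chain_mono (fun v => -(d x w xh v i)) wl wu Set.univ ?_ wl wu
      (fun k => le_refl _) (fun k => hwlu k) (fun k => le_refl _) (fun j _ => Set.mem_univ j)
    · simpa using this
    · intro j _ v hlo hhi s t hs hst ht
      simp only [neg_le_neg_iff]
      exact hwhmono i j x xh s t hs hst ht w hw v ⟨fun k => hlo k, fun k => hhi k⟩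
  -- the Lyapunov-like function for the invariance argument
  have hne' : (Finset.univ : Finset (Fin n)).Nonempty := Finset.univ_nonempty
  set G : ℝ → Fin n → ℝ := fun t i =>
    max (max (-(d (a t) wl (ah t) wu i)) (d (ah t) wu (a t) wl i))
      (max (a t i - ah t i) 0) with hG
  set f : ℝ → ℝ := fun t => Finset.univ.sup' hne' (fun i => G t i) with hf
  have hGf : ∀ t i, G t i ≤ f t := fun t i => Finset.le_sup' (fun i => G t i) (Finset.mem_univ i)
  have hfnn : ∀ t, 0 ≤ f t := fun t =>
    le_trans (le_trans (le_max_right _ _) (le_max_right _ _)) (hGf t (Classical.arbitrary _))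
  have hf0 : f 0 ≤ 0 := by
    apply Finset.sup'_le
    intro i _
    have h1 : (0:ℝ) ≤ d (a 0) wl (ah 0) wu i := h0SE.1 i
    have h2 : d (ah 0) wu (a 0) wl i ≤ 0 := h0SE.2 i
    have h3 : a 0 i ≤ ah 0 i := h0tri i
    simp only [hG]
    refine max_le (max_le (by linarith) h2) (max_le (by linarith) (le_refl _))
  -- key invariance: f ≤ 0 on [0, ∞)
  have key : ∀ t : ℝ, 0 ≤ t → f t ≤ 0 := by
    intro b hb
    have haC : ContinuousOn a (Icc 0 b) := fun s hs => ((ha s hs.1).continuousAt).continuousWithinAt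
    have hahC : ContinuousOn ah (Icc 0 b) :=
      fun s hs => ((hah s hs.1).continuousAt).continuousWithinAt
    have htraj1 : ContinuousOn (fun t => (((a t, wl), (ah t, wu)) :
        ((Fin n → ℝ) × (Fin m → ℝ)) × ((Fin n → ℝ) × (Fin m → ℝ)))) (Icc 0 b) :=
      (haC.prodMk continuousOn_const).prodMk (hahC.prodMk continuousOn_const)
    have htraj2 : ContinuousOn (fun t => (((ah t, wu), (a t, wl)) :
        ((Fin n → ℝ) × (Fin m → ℝ)) × ((Fin n → ℝ) × (Fin m → ℝ)))) (Icc 0 b) :=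
      (hahC.prodMk continuousOn_const).prodMk (haC.prodMk continuousOn_const)
    have hφC : ContinuousOn (fun t => d (a t) wl (ah t) wu) (Icc 0 b) :=
      hdmc.comp_continuousOn htraj1
    have hψC : ContinuousOn (fun t => d (ah t) wu (a t) wl) (Icc 0 b) :=
      hdmc.comp_continuousOn htraj2
    have hGC : ∀ i, ContinuousOn (fun t => G t i) (Icc 0 b) := by
      intro i
      simp only [hG]
      have h1 := (((continuous_apply i).comp_continuousOn hφC).neg).sup
        ((continuous_apply i).comp_continuousOn hψC)
      have h2 := (((continuous_apply i).comp_continuousOn haC).sub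
        ((continuous_apply i).comp_continuousOn hahC)).sup
        (continuousOn_const (c := (0:ℝ)))
      simpa using h1.sup h2
    have hfC : ContinuousOn f (Icc 0 b) := by
      simp only [hf]
      exact ContinuousOn.finset_sup'_apply hne' (fun i _ => hGC i)
    set S := ((fun t => (((a t, wl), (ah t, wu)) :
        ((Fin n → ℝ) × (Fin m → ℝ)) × ((Fin n → ℝ) × (Fin m → ℝ)))) '' Icc 0 b) ∪
      ((fun t => ((ah t, wu), (a t, wl))) '' Icc 0 b) with hS
    have hSco : IsCompact S :=
      (isCompact_Icc.image_of_continuousOn htraj1).union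
        (isCompact_Icc.image_of_continuousOn htraj2)
    have hP0S : ∀ s ∈ Icc (0:ℝ) b, (((a s, wl), (ah s, wu)) :
        ((Fin n → ℝ) × (Fin m → ℝ)) × ((Fin n → ℝ) × (Fin m → ℝ))) ∈ S :=
      fun s hs => Or.inl ⟨s, hs, rfl⟩
    have hP0S' : ∀ s ∈ Icc (0:ℝ) b, (((ah s, wu), (a s, wl)) :
        ((Fin n → ℝ) × (Fin m → ℝ)) × ((Fin n → ℝ) × (Fin m → ℝ))) ∈ S :=
      fun s hs => Or.inr ⟨s, hs, rfl⟩
    obtain ⟨t0, ht0, hBf'⟩ := isCompact_Icc.exists_isMaxOn ⟨0, le_refl (0:ℝ), hb⟩ hfC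
    have hBf : ∀ x ∈ Icc (0:ℝ) b, f x ≤ f t0 := fun x hx => hBf' hx
    set Bf := f t0 with hBfdef
    have hBf0 : 0 ≤ Bf := hfnn t0
    set Sc := Metric.cthickening (Bf + 1) S with hScdef
    have hSsub : S ⊆ Sc := Metric.self_subset_cthickening S
    obtain ⟨L, hL0, hL⟩ := hLip.exists_bound_isCompact hSco.cthickening
    have hLcoord : ∀ P, P ∈ Sc → ∀ Q, Q ∈ Sc → ∀ i : Fin n,
        |d P.1.1 P.1.2 P.2.1 P.2.2 i - d Q.1.1 Q.1.2 Q.2.1 Q.2.2 i| ≤ L * dist P Q := by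
      intro P hP Q hQ i
      calc |d P.1.1 P.1.2 P.2.1 P.2.2 i - d Q.1.1 Q.1.2 Q.2.1 Q.2.2 i|
          = dist (d P.1.1 P.1.2 P.2.1 P.2.2 i) (d Q.1.1 Q.1.2 Q.2.1 Q.2.2 i) :=
            (Real.dist_eq _ _).symm
        _ ≤ dist (d P.1.1 P.1.2 P.2.1 P.2.2) (d Q.1.1 Q.1.2 Q.2.1 Q.2.2) :=
            dist_le_pi_dist _ _ i
        _ ≤ L * dist P Q := hL P hP Q hQ
    have hev : ∀ x ∈ Ico (0:ℝ) b, ∀ ε > 0,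
        ∀ᶠ z in 𝓝[>] x, f z - f x ≤ (z - x) * (L * f x + ε) := by
      intro x hx ε hε
      have hxmem : x ∈ Icc 0 b := ⟨hx.1, le_of_lt hx.2⟩
      have hfx0 : 0 ≤ f x := hfnn x
      have hfxBf : f x ≤ Bf := hBf x hxmem
      have hpb : ∀ j, -(d (a x) wl (ah x) wu j) ≤ f x := fun j =>
        le_trans (le_trans (le_max_left _ _) (le_max_left _ _)) (hGf x j)
      have hqb : ∀ j, d (ah x) wu (a x) wl j ≤ f x := fun j =>
        le_trans (le_trans (le_max_right _ _) (le_max_left _ _)) (hGf x j)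
      have habx : ∀ j, a x j - ah x j ≤ f x := fun j =>
        le_trans (le_trans (le_max_left _ _) (le_max_right _ _)) (hGf x j)
      set ε₁ := ε / (L + 1) with hε₁def
      have hε₁ : 0 < ε₁ := div_pos hε (by linarith)
      have hLε₁ : L * ε₁ ≤ ε := by
        rw [hε₁def]
        rw [mul_div_assoc'] at *
        rw [div_le_iff₀ (by linarith : (0:ℝ) < L + 1)]
        nlinarith
      set M0 := ‖d (a x) wl (ah x) wu‖ + ‖d (ah x) wu (a x) wl‖ + f x + ε₁ with hM0def
      have hM00 : 0 ≤ M0 := by positivity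
      set δ₀ := 1 / (M0 + 1) with hδ₀def
      have hδ₀pos : 0 < δ₀ := by positivity
      have hδ₀M : δ₀ * M0 ≤ 1 := by
        rw [hδ₀def, div_mul_eq_mul_div, one_mul, div_le_one (by linarith)]
        linarith
      have hEz : ∀ᶠ z in 𝓝[>] x, z ∈ Ioc x b ∧ z - x ≤ δ₀ := by
        have h1 : Ioc x b ∈ 𝓝[>] x := Ioc_mem_nhdsGT_of_mem ⟨le_refl x, hx.2⟩
        have h2 : Ioc x (x + δ₀) ∈ 𝓝[>] x :=
          Ioc_mem_nhdsGT_of_mem ⟨le_refl x, by linarith⟩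
        filter_upwards [h1, h2] with z hz1 hz2
        exact ⟨hz1, by linarith [hz2.2]⟩
      have hE1 : ∀ᶠ z in 𝓝[>] x, ∀ j,
          |a z j - a x j - (z - x) * d (a x) wl (ah x) wu j| ≤ ε₁ * (z - x) := by
        have hda : HasDerivAt a (d (a x) wl (ah x) wu) x := ha x hx.1
        have h1 := (hasDerivAt_iff_tendsto.1 hda).eventually_lt_const hε₁
        have h2 := eventually_nhdsWithin_of_eventually_nhds (s := Ioi x) h1
        filter_upwards [h2, self_mem_nhdsWithin] with z hz (hzx : x < z)
        intro j
        have hzx' : 0 < z - x := by linarith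
        have habs : ‖z - x‖⁻¹ = (z - x)⁻¹ := by rw [Real.norm_eq_abs, abs_of_pos hzx']
        rw [habs] at hz
        have hn1 : ‖a z - a x - (z - x) • d (a x) wl (ah x) wu‖ ≤ ε₁ * (z - x) := by
          calc ‖a z - a x - (z - x) • d (a x) wl (ah x) wu‖
              = (z - x) * ((z - x)⁻¹ * ‖a z - a x - (z - x) • d (a x) wl (ah x) wu‖) := by
                field_simp
            _ ≤ (z - x) * ε₁ := mul_le_mul_of_nonneg_left (le_of_lt hz) (le_of_lt hzx')
            _ = ε₁ * (z - x) := mul_comm _ _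
        calc |a z j - a x j - (z - x) * d (a x) wl (ah x) wu j|
            = ‖(a z - a x - (z - x) • d (a x) wl (ah x) wu) j‖ := by
              simp [Real.norm_eq_abs]
          _ ≤ ‖a z - a x - (z - x) • d (a x) wl (ah x) wu‖ := norm_le_pi_norm _ j
          _ ≤ ε₁ * (z - x) := hn1
      have hE2 : ∀ᶠ z in 𝓝[>] x, ∀ j,
          |ah z j - ah x j - (z - x) * d (ah x) wu (a x) wl j| ≤ ε₁ * (z - x) := by
        have hda : HasDerivAt ah (d (ah x) wu (a x) wl) x := hah x hx.1
        have h1 := (hasDerivAt_iff_tendsto.1 hda).eventually_lt_const hε₁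
        have h2 := eventually_nhdsWithin_of_eventually_nhds (s := Ioi x) h1
        filter_upwards [h2, self_mem_nhdsWithin] with z hz (hzx : x < z)
        intro j
        have hzx' : 0 < z - x := by linarith
        have habs : ‖z - x‖⁻¹ = (z - x)⁻¹ := by rw [Real.norm_eq_abs, abs_of_pos hzx']
        rw [habs] at hz
        have hn1 : ‖ah z - ah x - (z - x) • d (ah x) wu (a x) wl‖ ≤ ε₁ * (z - x) := by
          calc ‖ah z - ah x - (z - x) • d (ah x) wu (a x) wl‖
              = (z - x) * ((z - x)⁻¹ * ‖ah z - ah x - (z - x) • d (ah x) wu (a x) wl‖) := by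
                field_simp
            _ ≤ (z - x) * ε₁ := mul_le_mul_of_nonneg_left (le_of_lt hz) (le_of_lt hzx')
            _ = ε₁ * (z - x) := mul_comm _ _
        calc |ah z j - ah x j - (z - x) * d (ah x) wu (a x) wl j|
            = ‖(ah z - ah x - (z - x) • d (ah x) wu (a x) wl) j‖ := by
              simp [Real.norm_eq_abs]
          _ ≤ ‖ah z - ah x - (z - x) • d (ah x) wu (a x) wl‖ := norm_le_pi_norm _ j
          _ ≤ ε₁ * (z - x) := hn1
      have hcont : ∀ g : ℝ → ℝ, ContinuousOn g (Icc 0 b) → g x < f x →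
          ∀ᶠ z in 𝓝[>] x, g z < f x := by
        intro g hg hlt
        have h1 : ∀ᶠ z in 𝓝[Ioi x ∩ Icc 0 b] x, g z < f x :=
          Tendsto.eventually_lt_const hlt ((hg x hxmem).mono inter_subset_right)
        rw [nhdsWithin_inter', eventually_inf_principal] at h1
        filter_upwards [h1, hEz] with z h1z hz
        exact h1z ⟨le_trans hx.1 (le_of_lt hz.1.1), hz.1.2⟩
      have hRHS : ∀ z, x < z → f x ≤ f x + (z - x) * (L * f x + ε) := by
        intro z hz
        have h1 : 0 ≤ L * f x + ε := add_nonneg (mul_nonneg hL0 hfx0) (le_of_lt hε)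
        nlinarith
      have Hall : ∀ᶠ z in 𝓝[>] x, ∀ i, G z i ≤ f x + (z - x) * (L * f x + ε) := by
        rw [eventually_all]
        intro i
        have Hφi : ∀ᶠ z in 𝓝[>] x,
            -(d (a z) wl (ah z) wu i) ≤ f x + (z - x) * (L * f x + ε) := by
          rcases lt_or_ge (-(d (a x) wl (ah x) wu i)) (f x) with hlt | hge
          · have hc := hcont (fun t => -(d (a t) wl (ah t) wu i))
              (((continuous_apply i).comp_continuousOn hφC).neg) hlt
            filter_upwards [hc, self_mem_nhdsWithin] with z hz (hzx : x < z)
            exact le_trans (le_of_lt hz) (hRHS z hzx)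
          · have hach : -(d (a x) wl (ah x) wu i) = f x := le_antisymm (hpb i) hge
            have habsp : ∀ j, |d (a x) wl (ah x) wu j| ≤ ‖d (a x) wl (ah x) wu‖ := fun j => by
              simpa [Real.norm_eq_abs] using norm_le_pi_norm (d (a x) wl (ah x) wu) j
            have habsq : ∀ j, |d (ah x) wu (a x) wl j| ≤ ‖d (ah x) wu (a x) wl‖ := fun j => by
              simpa [Real.norm_eq_abs] using norm_le_pi_norm (d (ah x) wu (a x) wl) j
            have hnp0 : 0 ≤ ‖d (a x) wl (ah x) wu‖ := norm_nonneg _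
            have hnq0 : 0 ≤ ‖d (ah x) wu (a x) wl‖ := norm_nonneg _
            have hmem_of : ∀ A B : Fin n → ℝ, dist A (a x) ≤ 1 → dist B (ah x) ≤ 1 →
                (((A, wl), (B, wu)) :
                  ((Fin n → ℝ) × (Fin m → ℝ)) × ((Fin n → ℝ) × (Fin m → ℝ))) ∈ Sc := by
              intro A B h1 h2
              refine Metric.mem_cthickening_of_dist_le _ _ _ _ (hP0S x hxmem) ?_
              rw [dist4]
              exact max_le (by linarith) (by linarith)
            filter_upwards [hEz, hE1, hE2] with z hz hz1 hz2
            obtain ⟨⟨hxz, hzb⟩, hzδ⟩ := hz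
            have hzx' : 0 < z - x := by linarith
            set Y : Fin n → ℝ := fun j => if j = i
              then a x i + (z - x) * d (a x) wl (ah x) wu i
              else a x j + (z - x) * min (d (a x) wl (ah x) wu j) 0 with hYdef
            set Yh : Fin n → ℝ := fun j =>
              ah x j + (z - x) * max (d (ah x) wu (a x) wl j) 0 with hYhdef
            set V : Fin n → ℝ := fun j => if j = i then a z i else min (a z j) (Y j) with hVdef
            set U : Fin n → ℝ := fun j => max (ah z j) (Yh j) with hUdef
            have hpieq : d (a x) wl (ah x) wu i = -(f x) := by linarith
            have hzfx1 : (z - x) * f x ≤ 1 := by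
              refine le_trans (le_trans (mul_le_mul hzδ ?_ hfx0 (le_of_lt hδ₀pos)) hδ₀M)
                (le_refl 1)
              rw [hM0def]; linarith
            have hYax : ∀ j, |Y j - a x j| ≤ (z - x) * f x := by
              intro j
              by_cases hj : j = i
              · subst hj
                simp only [hYdef, if_pos rfl, add_sub_cancel_left]
                rw [abs_mul, abs_of_pos hzx', hpieq, abs_neg, abs_of_nonneg hfx0]
              · simp only [hYdef, if_neg hj, add_sub_cancel_left]
                rw [abs_mul, abs_of_pos hzx']
                exact mul_le_mul_of_nonneg_left
                  (abs_min_zero_le_of (hpb j) hfx0) (le_of_lt hzx')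
            have hYhax : ∀ j, |Yh j - ah x j| ≤ (z - x) * f x := by
              intro j
              simp only [hYhdef, add_sub_cancel_left]
              rw [abs_mul, abs_of_pos hzx']
              exact mul_le_mul_of_nonneg_left
                (abs_max_zero_le_of (hqb j) hfx0) (le_of_lt hzx')
            have haz1 : ∀ j, |a z j - a x j| ≤ 1 := by
              intro j
              have h1 := abs_le.1 (hz1 j)
              have h2 := habsp j
              have h6 : ε₁ + |d (a x) wl (ah x) wu j| ≤ M0 := by rw [hM0def]; linarith
              have h7 : (z - x) * (ε₁ + |d (a x) wl (ah x) wu j|) ≤ δ₀ * M0 :=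
                mul_le_mul hzδ h6 (by positivity) (le_of_lt hδ₀pos)
              have h8 : (z - x) * d (a x) wl (ah x) wu j ≤ (z - x) * |d (a x) wl (ah x) wu j| :=
                mul_le_mul_of_nonneg_left (le_abs_self _) (le_of_lt hzx')
              have h9 : -((z - x) * |d (a x) wl (ah x) wu j|) ≤ (z - x) * d (a x) wl (ah x) wu j := by
                rw [neg_le]
                calc -((z - x) * d (a x) wl (ah x) wu j)
                    = (z - x) * -(d (a x) wl (ah x) wu j) := by ring
                  _ ≤ (z - x) * |d (a x) wl (ah x) wu j| :=
                      mul_le_mul_of_nonneg_left (neg_le_abs _) (le_of_lt hzx')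
              rw [abs_le]
              constructor <;> nlinarith [mul_pos hε₁ hzx']
            have hahz1 : ∀ j, |ah z j - ah x j| ≤ 1 := by
              intro j
              have h1 := abs_le.1 (hz2 j)
              have h2 := habsq j
              have h6 : ε₁ + |d (ah x) wu (a x) wl j| ≤ M0 := by rw [hM0def]; linarith
              have h7 : (z - x) * (ε₁ + |d (ah x) wu (a x) wl j|) ≤ δ₀ * M0 :=
                mul_le_mul hzδ h6 (by positivity) (le_of_lt hδ₀pos)
              have h8 : (z - x) * d (ah x) wu (a x) wl j ≤ (z - x) * |d (ah x) wu (a x) wl j| :=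
                mul_le_mul_of_nonneg_left (le_abs_self _) (le_of_lt hzx')
              have h9 : -((z - x) * |d (ah x) wu (a x) wl j|) ≤ (z - x) * d (ah x) wu (a x) wl j := by
                rw [neg_le]
                calc -((z - x) * d (ah x) wu (a x) wl j)
                    = (z - x) * -(d (ah x) wu (a x) wl j) := by ring
                  _ ≤ (z - x) * |d (ah x) wu (a x) wl j| :=
                      mul_le_mul_of_nonneg_left (neg_le_abs _) (le_of_lt hzx')
              rw [abs_le]
              constructor <;> nlinarith [mul_pos hε₁ hzx']
            have hmemY : (((Y, wl), (Yh, wu)) :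
                ((Fin n → ℝ) × (Fin m → ℝ)) × ((Fin n → ℝ) × (Fin m → ℝ))) ∈ Sc :=
              hmem_of Y Yh
                (pi_dist_le zero_le_one (fun j => le_trans (hYax j) hzfx1))
                (pi_dist_le zero_le_one (fun j => le_trans (hYhax j) hzfx1))
            have hmemV : (((V, wl), (U, wu)) :
                ((Fin n → ℝ) × (Fin m → ℝ)) × ((Fin n → ℝ) × (Fin m → ℝ))) ∈ Sc := by
              refine hmem_of V U (pi_dist_le zero_le_one ?_) (pi_dist_le zero_le_one ?_)
              · intro j
                by_cases hj : j = i
                · subst hj; simp only [hVdef, if_pos rfl]; exact haz1 j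
                · simp only [hVdef, if_neg hj]
                  exact le_trans abs_min_sub_le
                    (max_le (haz1 j) (le_trans (hYax j) hzfx1))
              · intro j
                simp only [hUdef]
                exact le_trans abs_max_sub_le
                  (max_le (hahz1 j) (le_trans (hYhax j) hzfx1))
            have hmemP0 : (((a x, wl), (ah x, wu)) :
                ((Fin n → ℝ) × (Fin m → ℝ)) × ((Fin n → ℝ) × (Fin m → ℝ))) ∈ Sc :=
              hSsub (hP0S x hxmem)
            -- step 1 : monotone comparison
            have hs1 : d V wl U wu i ≤ d (a z) wl (ah z) wu i := by
              calc d V wl U wu i ≤ d (a z) wl U wu i := by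
                    refine M1 i wl wu hwlmem hwumem V (a z) U ?_ ?_
                    · intro j
                      by_cases hj : j = i
                      · subst hj; simp [hVdef]
                      · simp only [hVdef, if_neg hj]; exact min_le_left _ _
                    · simp [hVdef]
                _ ≤ d (a z) wl (ah z) wu i :=
                    M2 i wl wu hwlmem hwumem (a z) (ah z) U (fun j => le_max_left _ _)
            -- step 2 : Lipschitz comparison V ↔ Y
            have hs2 : d Y wl Yh wu i - d V wl U wu i ≤ L * (ε₁ * (z - x)) := by
              have h1 := hLcoord _ hmemY _ hmemV i
              have h2 : dist (((Y, wl), (Yh, wu)) :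
                  ((Fin n → ℝ) × (Fin m → ℝ)) × ((Fin n → ℝ) × (Fin m → ℝ)))
                  ((V, wl), (U, wu)) ≤ ε₁ * (z - x) := by
                rw [dist4]
                have hεz0 : 0 ≤ ε₁ * (z - x) := by positivity
                refine max_le (pi_dist_le hεz0 ?_) (pi_dist_le hεz0 ?_)
                · intro j
                  rw [abs_sub_comm]
                  by_cases hj : j = i
                  · subst hj
                    simp only [hVdef, hYdef, if_pos rfl]
                    have h3 : a z j - (a x j + (z - x) * d (a x) wl (ah x) wu j)
                        = a z j - a x j - (z - x) * d (a x) wl (ah x) wu j := by ring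
                    rw [h3]; exact hz1 j
                  · simp only [hVdef, if_neg hj]
                    refine abs_min_sub_right ?_ hεz0
                    have h4 := (abs_le.1 (hz1 j)).2
                    have h5 : (z - x) * min (d (a x) wl (ah x) wu j) 0
                        ≤ (z - x) * d (a x) wl (ah x) wu j :=
                      mul_le_mul_of_nonneg_left (min_le_left _ _) (le_of_lt hzx')
                    have h6 := (abs_le.1 (hz1 j)).1
                    simp only [hYdef, if_neg hj]
                    linarith
                · intro j
                  rw [abs_sub_comm]
                  simp only [hUdef]
                  refine abs_max_sub_right ?_ hεz0
                  have h5 : (z - x) * max (d (ah x) wu (a x) wl j) 0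
                      ≥ (z - x) * d (ah x) wu (a x) wl j :=
                    mul_le_mul_of_nonneg_left (le_max_left _ _) (le_of_lt hzx')
                  have h6 := (abs_le.1 (hz2 j)).2
                  simp only [hYhdef]
                  linarith
              calc d Y wl Yh wu i - d V wl U wu i
                  ≤ |d Y wl Yh wu i - d V wl U wu i| := le_abs_self _
                _ ≤ L * dist (((Y, wl), (Yh, wu)) :
                      ((Fin n → ℝ) × (Fin m → ℝ)) × ((Fin n → ℝ) × (Fin m → ℝ)))
                      ((V, wl), (U, wu)) := h1
                _ ≤ L * (ε₁ * (z - x)) := mul_le_mul_of_nonneg_left h2 hL0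
            -- step 3 : Lipschitz comparison base ↔ Y
            have hs3 : d (a x) wl (ah x) wu i - d Y wl Yh wu i ≤ L * ((z - x) * f x) := by
              have h1 := hLcoord _ hmemP0 _ hmemY i
              have h2 : dist (((a x, wl), (ah x, wu)) :
                  ((Fin n → ℝ) × (Fin m → ℝ)) × ((Fin n → ℝ) × (Fin m → ℝ)))
                  ((Y, wl), (Yh, wu)) ≤ (z - x) * f x := by
                rw [dist4]
                have hzfx0 : 0 ≤ (z - x) * f x := by positivity
                refine max_le (pi_dist_le hzfx0 ?_) (pi_dist_le hzfx0 ?_)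
                · intro j; rw [abs_sub_comm]; exact hYax j
                · intro j; rw [abs_sub_comm]; exact hYhax j
              calc d (a x) wl (ah x) wu i - d Y wl Yh wu i
                  ≤ |d (a x) wl (ah x) wu i - d Y wl Yh wu i| := le_abs_self _
                _ ≤ L * dist (((a x, wl), (ah x, wu)) :
                      ((Fin n → ℝ) × (Fin m → ℝ)) × ((Fin n → ℝ) × (Fin m → ℝ)))
                      ((Y, wl), (Yh, wu)) := h1
                _ ≤ L * ((z - x) * f x) := mul_le_mul_of_nonneg_left h2 hL0
            have hLe : L * (ε₁ * (z - x)) ≤ ε * (z - x) := by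
              calc L * (ε₁ * (z - x)) = (L * ε₁) * (z - x) := by ring
                _ ≤ ε * (z - x) := mul_le_mul_of_nonneg_right hLε₁ (le_of_lt hzx')
            have hexp : (z - x) * (L * f x + ε) = L * ((z - x) * f x) + ε * (z - x) := by ring
            linarith
        have Hψi : ∀ᶠ z in 𝓝[>] x,
            d (ah z) wu (a z) wl i ≤ f x + (z - x) * (L * f x + ε) := by
          rcases lt_or_ge (d (ah x) wu (a x) wl i) (f x) with hlt | hge
          · have hc := hcont (fun t => d (ah t) wu (a t) wl i)
              ((continuous_apply i).comp_continuousOn hψC) hlt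
            filter_upwards [hc, self_mem_nhdsWithin] with z hz (hzx : x < z)
            exact le_trans (le_of_lt hz) (hRHS z hzx)
          · have hach : d (ah x) wu (a x) wl i = f x := le_antisymm (hqb i) hge
            have habsp : ∀ j, |d (a x) wl (ah x) wu j| ≤ ‖d (a x) wl (ah x) wu‖ := fun j => by
              simpa [Real.norm_eq_abs] using norm_le_pi_norm (d (a x) wl (ah x) wu) j
            have habsq : ∀ j, |d (ah x) wu (a x) wl j| ≤ ‖d (ah x) wu (a x) wl‖ := fun j => by
              simpa [Real.norm_eq_abs] using norm_le_pi_norm (d (ah x) wu (a x) wl) j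
            have hnp0 : 0 ≤ ‖d (a x) wl (ah x) wu‖ := norm_nonneg _
            have hnq0 : 0 ≤ ‖d (ah x) wu (a x) wl‖ := norm_nonneg _
            have hmem_of : ∀ A B : Fin n → ℝ, dist A (ah x) ≤ 1 → dist B (a x) ≤ 1 →
                (((A, wu), (B, wl)) :
                  ((Fin n → ℝ) × (Fin m → ℝ)) × ((Fin n → ℝ) × (Fin m → ℝ))) ∈ Sc := by
              intro A B h1 h2
              refine Metric.mem_cthickening_of_dist_le _ _ _ _ (hP0S' x hxmem) ?_
              rw [dist4]
              exact max_le (by linarith) (by linarith)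
            filter_upwards [hEz, hE1, hE2] with z hz hz1 hz2
            obtain ⟨⟨hxz, hzb⟩, hzδ⟩ := hz
            have hzx' : 0 < z - x := by linarith
            set Y : Fin n → ℝ := fun j =>
              a x j + (z - x) * min (d (a x) wl (ah x) wu j) 0 with hYdef
            set Yh : Fin n → ℝ := fun j => if j = i
              then ah x i + (z - x) * d (ah x) wu (a x) wl i
              else ah x j + (z - x) * max (d (ah x) wu (a x) wl j) 0 with hYhdef
            set V : Fin n → ℝ := fun j => if j = i then ah z i else max (ah z j) (Yh j)
              with hVdef
            set U : Fin n → ℝ := fun j => min (a z j) (Y j) with hUdef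
            have hqieq : d (ah x) wu (a x) wl i = f x := hach
            have hzfx1 : (z - x) * f x ≤ 1 := by
              refine le_trans (le_trans (mul_le_mul hzδ ?_ hfx0 (le_of_lt hδ₀pos)) hδ₀M)
                (le_refl 1)
              rw [hM0def]; linarith
            have hYax : ∀ j, |Y j - a x j| ≤ (z - x) * f x := by
              intro j
              simp only [hYdef, add_sub_cancel_left]
              rw [abs_mul, abs_of_pos hzx']
              exact mul_le_mul_of_nonneg_left
                (abs_min_zero_le_of (hpb j) hfx0) (le_of_lt hzx')
            have hYhax : ∀ j, |Yh j - ah x j| ≤ (z - x) * f x := by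
              intro j
              by_cases hj : j = i
              · subst hj
                simp only [hYhdef, if_pos rfl, add_sub_cancel_left]
                rw [abs_mul, abs_of_pos hzx', hqieq, abs_of_nonneg hfx0]
              · simp only [hYhdef, if_neg hj, add_sub_cancel_left]
                rw [abs_mul, abs_of_pos hzx']
                exact mul_le_mul_of_nonneg_left
                  (abs_max_zero_le_of (hqb j) hfx0) (le_of_lt hzx')
            have haz1 : ∀ j, |a z j - a x j| ≤ 1 := by
              intro j
              have h1 := abs_le.1 (hz1 j)
              have h2 := habsp j
              have h6 : ε₁ + |d (a x) wl (ah x) wu j| ≤ M0 := by rw [hM0def]; linarith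
              have h7 : (z - x) * (ε₁ + |d (a x) wl (ah x) wu j|) ≤ δ₀ * M0 :=
                mul_le_mul hzδ h6 (by positivity) (le_of_lt hδ₀pos)
              have h8 : (z - x) * d (a x) wl (ah x) wu j ≤ (z - x) * |d (a x) wl (ah x) wu j| :=
                mul_le_mul_of_nonneg_left (le_abs_self _) (le_of_lt hzx')
              have h9 : -((z - x) * |d (a x) wl (ah x) wu j|)
                  ≤ (z - x) * d (a x) wl (ah x) wu j := by
                rw [neg_le]
                calc -((z - x) * d (a x) wl (ah x) wu j)
                    = (z - x) * -(d (a x) wl (ah x) wu j) := by ring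
                  _ ≤ (z - x) * |d (a x) wl (ah x) wu j| :=
                      mul_le_mul_of_nonneg_left (neg_le_abs _) (le_of_lt hzx')
              rw [abs_le]
              constructor <;> nlinarith [mul_pos hε₁ hzx']
            have hahz1 : ∀ j, |ah z j - ah x j| ≤ 1 := by
              intro j
              have h1 := abs_le.1 (hz2 j)
              have h2 := habsq j
              have h6 : ε₁ + |d (ah x) wu (a x) wl j| ≤ M0 := by rw [hM0def]; linarith
              have h7 : (z - x) * (ε₁ + |d (ah x) wu (a x) wl j|) ≤ δ₀ * M0 :=
                mul_le_mul hzδ h6 (by positivity) (le_of_lt hδ₀pos)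
              have h8 : (z - x) * d (ah x) wu (a x) wl j ≤ (z - x) * |d (ah x) wu (a x) wl j| :=
                mul_le_mul_of_nonneg_left (le_abs_self _) (le_of_lt hzx')
              have h9 : -((z - x) * |d (ah x) wu (a x) wl j|)
                  ≤ (z - x) * d (ah x) wu (a x) wl j := by
                rw [neg_le]
                calc -((z - x) * d (ah x) wu (a x) wl j)
                    = (z - x) * -(d (ah x) wu (a x) wl j) := by ring
                  _ ≤ (z - x) * |d (ah x) wu (a x) wl j| :=
                      mul_le_mul_of_nonneg_left (neg_le_abs _) (le_of_lt hzx')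
              rw [abs_le]
              constructor <;> nlinarith [mul_pos hε₁ hzx']
            have hmemY : (((Yh, wu), (Y, wl)) :
                ((Fin n → ℝ) × (Fin m → ℝ)) × ((Fin n → ℝ) × (Fin m → ℝ))) ∈ Sc :=
              hmem_of Yh Y
                (pi_dist_le zero_le_one (fun j => le_trans (hYhax j) hzfx1))
                (pi_dist_le zero_le_one (fun j => le_trans (hYax j) hzfx1))
            have hmemV : (((V, wu), (U, wl)) :
                ((Fin n → ℝ) × (Fin m → ℝ)) × ((Fin n → ℝ) × (Fin m → ℝ))) ∈ Sc := by
              refine hmem_of V U (pi_dist_le zero_le_one ?_) (pi_dist_le zero_le_one ?_)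
              · intro j
                by_cases hj : j = i
                · subst hj; simp only [hVdef, if_pos rfl]; exact hahz1 j
                · simp only [hVdef, if_neg hj]
                  exact le_trans abs_max_sub_le
                    (max_le (hahz1 j) (le_trans (hYhax j) hzfx1))
              · intro j
                simp only [hUdef]
                exact le_trans abs_min_sub_le
                  (max_le (haz1 j) (le_trans (hYax j) hzfx1))
            have hmemP0 : (((ah x, wu), (a x, wl)) :
                ((Fin n → ℝ) × (Fin m → ℝ)) × ((Fin n → ℝ) × (Fin m → ℝ))) ∈ Sc :=
              hSsub (hP0S' x hxmem)
            -- step 1 : monotone comparison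
            have hs1 : d (ah z) wu (a z) wl i ≤ d V wu U wl i := by
              calc d (ah z) wu (a z) wl i ≤ d V wu (a z) wl i := by
                    refine M1 i wu wl hwumem hwlmem (ah z) V (a z) ?_ ?_
                    · intro j
                      by_cases hj : j = i
                      · subst hj; simp [hVdef]
                      · simp only [hVdef, if_neg hj]; exact le_max_left _ _
                    · simp [hVdef]
                _ ≤ d V wu U wl i :=
                    M2 i wu wl hwumem hwlmem V U (a z) (fun j => min_le_left _ _)
            -- step 2 : Lipschitz comparison V ↔ Y
            have hs2 : d V wu U wl i - d Yh wu Y wl i ≤ L * (ε₁ * (z - x)) := by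
              have h1 := hLcoord _ hmemV _ hmemY i
              have h2 : dist (((V, wu), (U, wl)) :
                  ((Fin n → ℝ) × (Fin m → ℝ)) × ((Fin n → ℝ) × (Fin m → ℝ)))
                  ((Yh, wu), (Y, wl)) ≤ ε₁ * (z - x) := by
                rw [dist4]
                have hεz0 : 0 ≤ ε₁ * (z - x) := by positivity
                refine max_le (pi_dist_le hεz0 ?_) (pi_dist_le hεz0 ?_)
                · intro j
                  by_cases hj : j = i
                  · subst hj
                    simp only [hVdef, hYhdef, if_pos rfl]
                    have h3 : ah z j - (ah x j + (z - x) * d (ah x) wu (a x) wl j)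
                        = ah z j - ah x j - (z - x) * d (ah x) wu (a x) wl j := by ring
                    rw [h3]; exact hz2 j
                  · simp only [hVdef, if_neg hj]
                    refine abs_max_sub_right ?_ hεz0
                    have h5 : (z - x) * max (d (ah x) wu (a x) wl j) 0
                        ≥ (z - x) * d (ah x) wu (a x) wl j :=
                      mul_le_mul_of_nonneg_left (le_max_left _ _) (le_of_lt hzx')
                    have h6 := (abs_le.1 (hz2 j)).2
                    simp only [hYhdef, if_neg hj]
                    linarith
                · intro j
                  simp only [hUdef]
                  refine abs_min_sub_right ?_ hεz0
                  have h5 : (z - x) * min (d (a x) wl (ah x) wu j) 0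
                      ≤ (z - x) * d (a x) wl (ah x) wu j :=
                    mul_le_mul_of_nonneg_left (min_le_left _ _) (le_of_lt hzx')
                  have h6 := (abs_le.1 (hz1 j)).1
                  simp only [hYdef]
                  linarith
              calc d V wu U wl i - d Yh wu Y wl i
                  ≤ |d V wu U wl i - d Yh wu Y wl i| := le_abs_self _
                _ ≤ L * dist (((V, wu), (U, wl)) :
                      ((Fin n → ℝ) × (Fin m → ℝ)) × ((Fin n → ℝ) × (Fin m → ℝ)))
                      ((Yh, wu), (Y, wl)) := h1
                _ ≤ L * (ε₁ * (z - x)) := mul_le_mul_of_nonneg_left h2 hL0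
            -- step 3 : Lipschitz comparison Y ↔ base
            have hs3 : d Yh wu Y wl i - d (ah x) wu (a x) wl i ≤ L * ((z - x) * f x) := by
              have h1 := hLcoord _ hmemY _ hmemP0 i
              have h2 : dist (((Yh, wu), (Y, wl)) :
                  ((Fin n → ℝ) × (Fin m → ℝ)) × ((Fin n → ℝ) × (Fin m → ℝ)))
                  ((ah x, wu), (a x, wl)) ≤ (z - x) * f x := by
                rw [dist4]
                have hzfx0 : 0 ≤ (z - x) * f x := by positivity
                refine max_le (pi_dist_le hzfx0 ?_) (pi_dist_le hzfx0 ?_)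
                · intro j; exact hYhax j
                · intro j; exact hYax j
              calc d Yh wu Y wl i - d (ah x) wu (a x) wl i
                  ≤ |d Yh wu Y wl i - d (ah x) wu (a x) wl i| := le_abs_self _
                _ ≤ L * dist (((Yh, wu), (Y, wl)) :
                      ((Fin n → ℝ) × (Fin m → ℝ)) × ((Fin n → ℝ) × (Fin m → ℝ)))
                      ((ah x, wu), (a x, wl)) := h1
                _ ≤ L * ((z - x) * f x) := mul_le_mul_of_nonneg_left h2 hL0
            have hLe : L * (ε₁ * (z - x)) ≤ ε * (z - x) := by
              calc L * (ε₁ * (z - x)) = (L * ε₁) * (z - x) := by ring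
                _ ≤ ε * (z - x) := mul_le_mul_of_nonneg_right hLε₁ (le_of_lt hzx')
            have hexp : (z - x) * (L * f x + ε) = L * ((z - x) * f x) + ε * (z - x) := by ring
            linarith
        have Habi : ∀ᶠ z in 𝓝[>] x,
            a z i - ah z i ≤ f x + (z - x) * (L * f x + ε) := by
          rcases lt_or_ge (a x i - ah x i) (f x) with hlt | hge
          · have hc := hcont (fun t => a t i - ah t i)
              (((continuous_apply i).comp_continuousOn haC).sub
                ((continuous_apply i).comp_continuousOn hahC)) hlt
            filter_upwards [hc, self_mem_nhdsWithin] with z hz (hzx : x < z)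
            exact le_trans (le_of_lt hz) (hRHS z hzx)
          · have hach : a x i - ah x i = f x := le_antisymm (habx i) hge
            set v' : Fin n → ℝ := fun j => if j = i then ah x j else min (a x j) (ah x j)
              with hv'def
            set U' : Fin n → ℝ := fun j => max (a x j) (ah x j) with hU'def
            have hP0 : (((a x, wl), (ah x, wu)) :
                ((Fin n → ℝ) × (Fin m → ℝ)) × ((Fin n → ℝ) × (Fin m → ℝ))) ∈ Sc :=
              hSsub (hP0S x hxmem)
            have hBf1 : (0:ℝ) ≤ Bf + 1 := by linarith
            have hfxB1 : f x ≤ Bf + 1 := by linarith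
            have hdistv : dist (((v', wl), (U', wu)) :
                ((Fin n → ℝ) × (Fin m → ℝ)) × ((Fin n → ℝ) × (Fin m → ℝ)))
                ((a x, wl), (ah x, wu)) ≤ f x := by
              rw [dist4]
              refine max_le (pi_dist_le hfx0 ?_) (pi_dist_le hfx0 ?_)
              · intro j
                by_cases hj : j = i
                · subst hj
                  simp only [hv'def, if_pos rfl]
                  rw [abs_sub_comm, abs_of_nonneg (by linarith [hach])]
                  linarith [hach]
                · simp only [hv'def, if_neg hj]
                  rw [min_comm]
                  exact abs_min_sub_right (habx j) hfx0
              · intro j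
                simp only [hU'def]
                exact abs_max_sub_right (habx j) hfx0
            have hmemv : (((v', wl), (U', wu)) :
                ((Fin n → ℝ) × (Fin m → ℝ)) × ((Fin n → ℝ) × (Fin m → ℝ))) ∈ Sc := by
              refine Metric.mem_cthickening_of_dist_le _ _ _ _ (hP0S x hxmem) ?_
              exact le_trans hdistv hfxB1
            have hq1 : d v' wl U' wu i ≤ d (ah x) wu (a x) wl i := by
              calc d v' wl U' wu i
                  ≤ d v' wl (a x) wu i :=
                    M2 i wl wu hwlmem hwumem v' (a x) U' (fun j => le_max_left _ _)
                _ ≤ d (ah x) wl (a x) wu i := by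
                    refine M1 i wl wu hwlmem hwumem v' (ah x) (a x) ?_ ?_
                    · intro j
                      by_cases hj : j = i
                      · subst hj; simp [hv'def]
                      · simp only [hv'def, if_neg hj]
                        exact min_le_right _ _
                    · simp [hv'def]
                _ ≤ d (ah x) wl (a x) wl i := M4 i (ah x) (a x) wl hwlmem
                _ ≤ d (ah x) wu (a x) wl i := M3 i (ah x) (a x) wl hwlmem
            have hq2 : d (a x) wl (ah x) wu i - d v' wl U' wu i ≤ L * f x := by
              have h1 := hLcoord _ hP0 _ hmemv i
              calc d (a x) wl (ah x) wu i - d v' wl U' wu i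
                  ≤ |d (a x) wl (ah x) wu i - d v' wl U' wu i| := le_abs_self _
                _ ≤ L * dist (((a x, wl), (ah x, wu)) :
                      ((Fin n → ℝ) × (Fin m → ℝ)) × ((Fin n → ℝ) × (Fin m → ℝ)))
                      ((v', wl), (U', wu)) := h1
                _ ≤ L * f x := by
                    rw [dist_comm] at hdistv
                    exact mul_le_mul_of_nonneg_left hdistv hL0
            have hD : d (a x) wl (ah x) wu i - d (ah x) wu (a x) wl i ≤ L * f x := by
              linarith
            have hgd : HasDerivAt (fun s => a s i - ah s i)
                (d (a x) wl (ah x) wu i - d (ah x) wu (a x) wl i) x :=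
              (hasDerivAt_pi.1 (ha x hx.1) i).sub (hasDerivAt_pi.1 (hah x hx.1) i)
            have hev3 : ∀ᶠ z in 𝓝[≠] x,
                slope (fun s => a s i - ah s i) x z < L * f x + ε :=
              (hasDerivAt_iff_tendsto_slope.1 hgd).eventually_lt_const (by linarith)
            have hmono : 𝓝[>] x ≤ 𝓝[≠] x :=
              nhdsWithin_mono x (fun z hz => ne_of_gt hz)
            filter_upwards [hev3.filter_mono hmono, self_mem_nhdsWithin]
              with z hz (hzx : x < z)
            have hzx' : 0 < z - x := by linarith
            rw [slope_def_field] at hz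
            rw [div_lt_iff₀ hzx'] at hz
            have h6 : a z i - ah z i ≤ (a x i - ah x i) + (z - x) * (L * f x + ε) := by
              nlinarith [hz]
            rw [hach] at h6
            linarith
        filter_upwards [Hφi, Hψi, Habi, self_mem_nhdsWithin] with z h1 h2 h3 (hzx : x < z)
        simp only [hG]
        exact max_le (max_le h1 h2) (max_le h3 (le_trans hfx0 (hRHS z hzx)))
      filter_upwards [Hall] with z hz
      have hfz : f z ≤ f x + (z - x) * (L * f x + ε) :=
        Finset.sup'_le _ _ (fun i _ => hz i)
      linarith
    exact gronwall_zero hfC hf0 hev b ⟨hb, le_refl b⟩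
  -- global consequences
  have Hφ : ∀ t : ℝ, 0 ≤ t → ∀ i, 0 ≤ d (a t) wl (ah t) wu i := by
    intro t ht i
    have h1 := le_trans (le_trans (le_max_left _ _) (le_max_left _ _)) (le_trans (hGf t i) (key t ht))
    linarith
  have Hψ : ∀ t : ℝ, 0 ≤ t → ∀ i, d (ah t) wu (a t) wl i ≤ 0 :=
    fun t ht i => le_trans (le_trans (le_max_right _ _) (le_max_left _ _))
      (le_trans (hGf t i) (key t ht))
  have Hab : ∀ t : ℝ, 0 ≤ t → ∀ i, a t i ≤ ah t i := by
    intro t ht i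
    have h1 := le_trans (le_trans (le_max_left _ _) (le_max_right _ _))
      (le_trans (hGf t i) (key t ht))
    linarith
  -- coordinatewise derivatives
  have hderiva : ∀ (i : Fin n), ∀ s ∈ Set.Ici (0:ℝ),
      HasDerivAt (fun t => a t i) (d (a s) wl (ah s) wu i) s :=
    fun i s hs => hasDerivAt_pi.1 (ha s hs) i
  have hderivah : ∀ (i : Fin n), ∀ s ∈ Set.Ici (0:ℝ),
      HasDerivAt (fun t => ah t i) (d (ah s) wu (a s) wl i) s :=
    fun i s hs => hasDerivAt_pi.1 (hah s hs) i
  have amono : ∀ i, MonotoneOn (fun t => a t i) (Ici 0) := by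
    intro i
    apply monotoneOn_of_hasDerivWithinAt_nonneg (convex_Ici 0)
      (f' := fun s => d (a s) wl (ah s) wu i)
    · exact fun s hs => ((hderiva i s hs).continuousAt).continuousWithinAt
    · intro s hs
      rw [interior_Ici] at hs
      exact (hderiva i s (Set.mem_Ici.2 (le_of_lt hs))).hasDerivWithinAt
    · intro s hs
      rw [interior_Ici] at hs
      exact Hφ s (le_of_lt hs) i
  have ahanti : ∀ i, AntitoneOn (fun t => ah t i) (Ici 0) := by
    intro i
    apply antitoneOn_of_hasDerivWithinAt_nonpos (convex_Ici 0)
      (f' := fun s => d (ah s) wu (a s) wl i)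
    · exact fun s hs => ((hderivah i s hs).continuousAt).continuousWithinAt
    · intro s hs
      rw [interior_Ici] at hs
      exact (hderivah i s (Set.mem_Ici.2 (le_of_lt hs))).hasDerivWithinAt
    · intro s hs
      rw [interior_Ici] at hs
      exact Hψ s (le_of_lt hs) i
  have hub : ∀ (i : Fin n) (t : ℝ), a (max t 0) i ≤ ah 0 i := by
    intro i t
    have h1 : a (max t 0) i ≤ ah (max t 0) i := Hab _ (le_max_right t 0) i
    have h2 : ah (max t 0) i ≤ ah 0 i :=
      ahanti i (le_refl (0:ℝ)) (le_max_right t 0) (le_max_right t 0)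
    linarith
  have hlb : ∀ (i : Fin n) (t : ℝ), a 0 i ≤ ah (max t 0) i := by
    intro i t
    have h1 : a 0 i ≤ a (max t 0) i :=
      amono i (le_refl (0:ℝ)) (le_max_right t 0) (le_max_right t 0)
    have h2 : a (max t 0) i ≤ ah (max t 0) i := Hab _ (le_max_right t 0) i
    linarith
  set xeq : Fin n → ℝ := fun i => ⨆ t : ℝ, a (max t 0) i with hxeqdef
  set xheq : Fin n → ℝ := fun i => ⨅ t : ℝ, ah (max t 0) i with hxheqdef
  have hmona : ∀ i, Monotone (fun t : ℝ => a (max t 0) i) := fun i s t hst =>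
    amono i (le_max_right s 0) (le_max_right t 0) (max_le_max hst (le_refl 0))
  have hmonah : ∀ i, Antitone (fun t : ℝ => ah (max t 0) i) := fun i s t hst =>
    ahanti i (le_max_right s 0) (le_max_right t 0) (max_le_max hst (le_refl 0))
  have hbddA : ∀ i, BddAbove (range (fun t : ℝ => a (max t 0) i)) := by
    intro i; exact ⟨ah 0 i, by rintro y ⟨t, rfl⟩; exact hub i t⟩
  have hbddB : ∀ i, BddBelow (range (fun t : ℝ => ah (max t 0) i)) := by
    intro i; exact ⟨a 0 i, by rintro y ⟨t, rfl⟩; exact hlb i t⟩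
  have taci : ∀ i, Tendsto (fun t => a t i) atTop (𝓝 (xeq i)) := by
    intro i
    refine (tendsto_atTop_ciSup (hmona i) (hbddA i)).congr' ?_
    filter_upwards [eventually_ge_atTop (0:ℝ)] with t ht
    rw [max_eq_left ht]
  have tahci : ∀ i, Tendsto (fun t => ah t i) atTop (𝓝 (xheq i)) := by
    intro i
    refine (tendsto_atTop_ciInf (hmonah i) (hbddB i)).congr' ?_
    filter_upwards [eventually_ge_atTop (0:ℝ)] with t ht
    rw [max_eq_left ht]
  have ta : Tendsto a atTop (𝓝 xeq) := tendsto_pi_nhds.2 taci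
  have tah : Tendsto ah atTop (𝓝 xheq) := tendsto_pi_nhds.2 tahci
  have haxle : ∀ (i : Fin n) (t : ℝ), 0 ≤ t → a t i ≤ xeq i := by
    intro i t ht
    have := le_ciSup (hbddA i) t
    rwa [max_eq_left ht] at this
  have hahge : ∀ (i : Fin n) (t : ℝ), 0 ≤ t → xheq i ≤ ah t i := by
    intro i t ht
    have := ciInf_le (hbddB i) t
    rwa [max_eq_left ht] at this
  have hbig1 : Tendsto (fun t => (((a t, wl), (ah t, wu)) :
      ((Fin n → ℝ) × (Fin m → ℝ)) × ((Fin n → ℝ) × (Fin m → ℝ)))) atTop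
      (𝓝 ((xeq, wl), (xheq, wu))) :=
    Tendsto.prodMk_nhds (Tendsto.prodMk_nhds ta tendsto_const_nhds)
      (Tendsto.prodMk_nhds tah tendsto_const_nhds)
  have hbig2 : Tendsto (fun t => (((ah t, wu), (a t, wl)) :
      ((Fin n → ℝ) × (Fin m → ℝ)) × ((Fin n → ℝ) × (Fin m → ℝ)))) atTop
      (𝓝 ((xheq, wu), (xeq, wl))) :=
    Tendsto.prodMk_nhds (Tendsto.prodMk_nhds tah tendsto_const_nhds)
      (Tendsto.prodMk_nhds ta tendsto_const_nhds)
  have hciφ : ∀ i, Tendsto (fun t => d (a t) wl (ah t) wu i) atTop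
      (𝓝 (d xeq wl xheq wu i)) := by
    intro i
    exact (((continuous_apply i).comp hdmc).tendsto (((xeq, wl), (xheq, wu)))).comp hbig1
  have hciψ : ∀ i, Tendsto (fun t => d (ah t) wu (a t) wl i) atTop
      (𝓝 (d xheq wu xeq wl i)) := by
    intro i
    exact (((continuous_apply i).comp hdmc).tendsto (((xheq, wu), (xeq, wl)))).comp hbig2
  have heq1 : ∀ i, d xeq wl xheq wu i = 0 := by
    intro i
    have hge0 : 0 ≤ d xeq wl xheq wu i :=
      ge_of_tendsto (hciφ i)
        (by filter_upwards [eventually_ge_atTop (0:ℝ)] with t ht; exact Hφ t ht i)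
    by_contra hne0
    have hpos : 0 < d xeq wl xheq wu i := lt_of_le_of_ne hge0 (Ne.symm hne0)
    set c := d xeq wl xheq wu i with hcdef
    have hev2 : ∀ᶠ t in atTop, c/2 < d (a t) wl (ah t) wu i :=
      (hciφ i).eventually_const_lt (by linarith)
    obtain ⟨T0, hT0⟩ := eventually_atTop.1 (hev2.and (eventually_ge_atTop (0:ℝ)))
    set T := max T0 0 with hTdef
    have hTnn : (0:ℝ) ≤ T := le_max_right _ _
    have hT0' : ∀ s, T ≤ s → c/2 < d (a s) wl (ah s) wu i :=
      fun s hs => (hT0 s (le_trans (le_max_left _ _) hs)).1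
    set T' := T + (2/c) * (xeq i - a T i) + 1 with hT'def
    have hc0 : c ≠ 0 := ne_of_gt hpos
    have hxga : 0 ≤ xeq i - a T i := by linarith [haxle i T hTnn]
    have hTT' : T ≤ T' := by
      have h1 : 0 ≤ (2/c) * (xeq i - a T i) :=
        mul_nonneg (le_of_lt (div_pos two_pos hpos)) hxga
      rw [hT'def]; linarith
    have hgrow := growth_of_deriv (g := fun t => a t i)
      (g' := fun s => d (a s) wl (ah s) wu i) (c := c/2) hTT'
      (fun s hs => hderiva i s (le_trans hTnn hs.1))
      (fun s hs => le_of_lt (hT0' s hs.1))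
    have h2 := haxle i T' (le_trans hTnn hTT')
    have h3 : c/2 * (T' - T) = (xeq i - a T i) + c/2 := by
      have h4 : T' - T = (2/c) * (xeq i - a T i) + 1 := by rw [hT'def]; ring
      rw [h4]
      field_simp
    rw [h3] at hgrow
    linarith
  have heq2 : ∀ i, d xheq wu xeq wl i = 0 := by
    intro i
    have hle0 : d xheq wu xeq wl i ≤ 0 :=
      le_of_tendsto (hciψ i)
        (by filter_upwards [eventually_ge_atTop (0:ℝ)] with t ht; exact Hψ t ht i)
    by_contra hne0
    have hneg : d xheq wu xeq wl i < 0 := lt_of_le_of_ne hle0 hne0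
    set c := d xheq wu xeq wl i with hcdef
    have hev2 : ∀ᶠ t in atTop, d (ah t) wu (a t) wl i < c/2 :=
      (hciψ i).eventually_lt_const (by linarith)
    obtain ⟨T0, hT0⟩ := eventually_atTop.1 (hev2.and (eventually_ge_atTop (0:ℝ)))
    set T := max T0 0 with hTdef
    have hTnn : (0:ℝ) ≤ T := le_max_right _ _
    have hT0' : ∀ s, T ≤ s → d (ah s) wu (a s) wl i < c/2 :=
      fun s hs => (hT0 s (le_trans (le_max_left _ _) hs)).1
    set T' := T + (2/(-c)) * (ah T i - xheq i) + 1 with hT'def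
    have hc0 : c ≠ 0 := ne_of_lt hneg
    have hxga : 0 ≤ ah T i - xheq i := by linarith [hahge i T hTnn]
    have hTT' : T ≤ T' := by
      have h1 : 0 ≤ (2/(-c)) * (ah T i - xheq i) :=
        mul_nonneg (le_of_lt (div_pos two_pos (by linarith))) hxga
      rw [hT'def]; linarith
    have hgrow := growth_of_deriv (g := fun t => -(ah t i))
      (g' := fun s => -(d (ah s) wu (a s) wl i)) (c := -c/2) hTT'
      (fun s hs => (hderivah i s (le_trans hTnn hs.1)).neg)
      (fun s hs => by linarith [hT0' s hs.1])
    have h2 := hahge i T' (le_trans hTnn hTT')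
    have h3 : -c/2 * (T' - T) = (ah T i - xheq i) + (-c)/2 := by
      have h4 : T' - T = (2/(-c)) * (ah T i - xheq i) + 1 := by rw [hT'def]; ring
      rw [h4, div_neg]
      field_simp
      ring
    rw [h3] at hgrow
    linarith
  refine ⟨xeq, xheq, ta, tah, funext heq1, funext heq2, ?_, ?_, ?_⟩
  · intro i
    exact ge_of_tendsto (taci i)
      (by filter_upwards [eventually_ge_atTop (0:ℝ)] with t ht;
          exact amono i (le_refl (0:ℝ)) ht ht)
  · intro i
    refine le_of_tendsto_of_tendsto (taci i) (tahci i) ?_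
    filter_upwards [eventually_ge_atTop (0:ℝ)] with t ht
    exact Hab t ht i
  · intro i
    exact le_of_tendsto (tahci i)
      (by filter_upwards [eventually_ge_atTop (0:ℝ)] with t ht;
          exact ahanti i (le_refl (0:ℝ)) ht ht)
end

section
/- (Theorem 1, Part 3) Suppose F is mixed-monotone with respect to a decomposition function d, and let (a, â) : [0, ∞) → ℝⁿ × ℝⁿ be a solution of the deterministic embedding ODE (ȧ, ȧ̂) = e(a, â) with a(0) ⪯ â(0) and 0 ⪯_SE e(a(0), â(0)), and let (x_eq, x̂_eq) := lim_{t→∞} (a(t), â(t)) (which exists). Then the hyperrectangle [x_eq, x̂_eq] is robustly forward invariant for ẋ = F(x, w) and is attractive from [a(0), â(0)]: for every solution x : [0, ∞) → ℝⁿ of ẋ = F(x, w(t)) under a piecewise continuous disturbance w valued in 𝒲 with x(0) ∈ [a(0), â(0)], and every open set U ⊇ [x_eq, x̂_eq], there exists T > 0 such that x(t) ∈ U for all t ≥ T. -/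
open Set Function Filter Topology

section AuxiliaryLemmas
open Metric


lemma locallyLipschitz_lipschitzOn_compact {α β : Type*} [MetricSpace α] [MetricSpace β]
    {f : α → β} (hf : LocallyLipschitz f) {s : Set α} (hs : IsCompact s) :
    ∃ K : ℝ, 0 ≤ K ∧ ∀ p ∈ s, ∀ q ∈ s, dist (f p) (f q) ≤ K * dist p q := by
  have hcont : Continuous f := hf.continuous
  choose Kf t htmem hlip using hf
  have hball : ∀ x : α, ∃ ε > 0, ball x ε ⊆ t x := fun x => Metric.mem_nhds_iff.1 (htmem x)
  choose ε hε hbs using hball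
  obtain ⟨u, hus, hcov⟩ := hs.elim_nhds_subcover (fun x => ball x (ε x / 2))
    (fun x _ => ball_mem_nhds x (half_pos (hε x)))
  rcases u.eq_empty_or_nonempty with rfl | hu
  · refine ⟨0, le_rfl, fun p hp => ?_⟩
    simp only [Finset.notMem_empty, Set.iUnion_of_empty, Set.iUnion_empty,
      Set.subset_empty_iff] at hcov
    exact absurd hp (by rw [hcov]; exact Set.notMem_empty p)
  · obtain ⟨M, hM⟩ := Metric.isBounded_iff.1 (hs.image hcont).isBounded
    set δ : ℝ := u.inf' hu (fun x => ε x / 2) with hδdef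
    have hδpos : 0 < δ := by
      rw [hδdef, Finset.lt_inf'_iff]
      exact fun x _ => half_pos (hε x)
    set K0 : NNReal := u.sup (fun x => Kf x) with hK0
    refine ⟨max (max (K0 : ℝ) (M / δ)) 0, le_max_right _ _, fun p hp q hq => ?_⟩
    rcases lt_or_ge (dist p q) δ with hlt | hge
    · obtain ⟨x, hxmem⟩ := Set.mem_iUnion₂.1 (hcov hp)
      obtain ⟨hxu, hpx⟩ := hxmem
      have hpx2 : dist p x < ε x / 2 := hpx
      have h2 : δ ≤ ε x / 2 := Finset.inf'_le _ hxu
      have hqx : q ∈ ball x (ε x) := by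
        have htri : dist q x ≤ dist q p + dist p x := dist_triangle _ _ _
        have hqp : dist q p < δ := by rwa [dist_comm]
        exact mem_ball.2 (by linarith)
      have hpx' : p ∈ ball x (ε x) := mem_ball.2 (by linarith [hε x])
      have hl := (hlip x).dist_le_mul p (hbs x hpx') q (hbs x hqx)
      refine hl.trans (mul_le_mul_of_nonneg_right ?_ dist_nonneg)
      have hK : Kf x ≤ K0 := Finset.le_sup hxu
      calc (Kf x : ℝ) ≤ (K0 : ℝ) := by exact_mod_cast hK
        _ ≤ max (max (K0 : ℝ) (M / δ)) 0 := le_trans (le_max_left _ _) (le_max_left _ _)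
    · have h1 : dist (f p) (f q) ≤ M := hM ⟨p, hp, rfl⟩ ⟨q, hq, rfl⟩
      have hM0 : 0 ≤ M := le_trans dist_nonneg h1
      calc dist (f p) (f q) ≤ M := h1
        _ = (M / δ) * δ := by field_simp
        _ ≤ (M / δ) * dist p q := mul_le_mul_of_nonneg_left hge (by positivity)
        _ ≤ max (max (K0 : ℝ) (M / δ)) 0 * dist p q := mul_le_mul_of_nonneg_right
            (le_trans (le_max_right _ _) (le_max_left _ _)) dist_nonneg


lemma update_chain_mono {k : ℕ} (φ : (Fin k → ℝ) → ℝ) (lo hi x x' : Fin k → ℝ)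
    (hx : x ∈ Set.Icc lo hi) (hx' : x' ∈ Set.Icc lo hi) (hxx' : x ≤ x')
    (E : Set (Fin k)) (hE : ∀ j ∈ E, x j = x' j)
    (h : ∀ j ∉ E, ∀ y ∈ Set.Icc lo hi, ∀ s t : ℝ, lo j ≤ s → s ≤ t → t ≤ hi j →
          φ (Function.update y j s) ≤ φ (Function.update y j t)) :
    φ x ≤ φ x' := by
  have key : ∀ S : Finset (Fin k),
      φ x ≤ φ (fun j => if j ∈ S then x' j else x j) ∧
      (fun j => if j ∈ S then x' j else x j) ∈ Set.Icc lo hi := by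
    intro S
    induction S using Finset.induction with
    | empty =>
      have he : (fun j => if j ∈ (∅ : Finset (Fin k)) then x' j else x j) = x := by
        funext j; simp
      rw [he]; exact ⟨le_rfl, hx⟩
    | @insert a S haS ih =>
      obtain ⟨ih1, ih2⟩ := ih
      have hupd : (fun j => if j ∈ insert a S then x' j else x j) =
          Function.update (fun j => if j ∈ S then x' j else x j) a (x' a) := by
        funext j
        by_cases hj : j = a
        · subst hj; simp [Function.update_self]
        · simp [Function.update_of_ne hj, hj]
      have hmem : (fun j => if j ∈ insert a S then x' j else x j) ∈ Set.Icc lo hi := by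
        constructor <;> intro j <;> by_cases hj : j ∈ insert a S <;> simp only [hj, if_pos, if_neg,
          ite_true, ite_false]
        · exact hx'.1 j
        · exact hx.1 j
        · exact hx'.2 j
        · exact hx.2 j
      refine ⟨?_, hmem⟩
      by_cases haE : a ∈ E
      · have heq : (fun j => if j ∈ insert a S then x' j else x j) =
            (fun j => if j ∈ S then x' j else x j) := by
          funext j
          by_cases hj : j = a
          · subst hj; simp [haS, (hE j haE).symm]
          · simp [hj]
        rw [heq]; exact ih1
      · have hya : (fun j => if j ∈ S then x' j else x j) a = x a := by simp [haS]
        have step := h a haE _ ih2 (x a) (x' a) (hx.1 a) (hxx' a) (hx'.2 a)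
        have hcollapse : Function.update (fun j => if j ∈ S then x' j else x j) a (x a) =
            (fun j => if j ∈ S then x' j else x j) := by
          rw [← hya]; exact Function.update_eq_self _ _
        rw [hupd]
        calc φ x ≤ φ (fun j => if j ∈ S then x' j else x j) := ih1
          _ = φ (Function.update (fun j => if j ∈ S then x' j else x j) a (x a)) := by
              rw [hcollapse]
          _ ≤ _ := step
  have hu := (key Finset.univ).1
  have he : (fun j => if j ∈ (Finset.univ : Finset (Fin k)) then x' j else x j) = x' := by
    funext j; simp
  rwa [he] at hu


lemma max_gronwall {ι : Type*} [Fintype ι] [Nonempty ι] (g g' : ι → ℝ → ℝ) (T K : ℝ)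
    (hK : 0 ≤ K)
    (hg : ∀ i, ∀ t ∈ Set.Icc (0:ℝ) T, HasDerivAt (g i) (g' i t) t)
    (h0 : ∀ i, g i 0 ≤ 0)
    (hb : ∀ t ∈ Set.Ico (0:ℝ) T, ∀ i, (∀ j, g j t ≤ g i t) → 0 < g i t → g i t ≤ 1 →
          g' i t ≤ K * g i t) :
    ∀ t ∈ Set.Icc (0:ℝ) T, ∀ i, g i t ≤ 0 := by
  rcases le_or_gt T 0 with hT | hT
  · intro t ht i
    have h : t = 0 := le_antisymm (ht.2.trans hT) ht.1
    exact h ▸ h0 i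
  set f : ℝ → ℝ := fun t => Finset.univ.sup' Finset.univ_nonempty (fun i => g i t) with hfdef
  have hgc : ∀ i, ∀ t ∈ Set.Icc (0:ℝ) T, ContinuousAt (g i) t := fun i t ht =>
    (hg i t ht).continuousAt
  have hfca : ∀ t ∈ Set.Icc (0:ℝ) T, ContinuousAt f t := fun t ht =>
    ContinuousAt.finset_sup'_apply Finset.univ_nonempty (fun i _ => hgc i t ht)
  have hfc : ContinuousOn f (Set.Icc 0 T) := fun t ht => (hfca t ht).continuousWithinAt
  have hattain : ∀ t : ℝ, ∃ i, f t = g i t := by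
    intro t
    obtain ⟨i, _, hi⟩ := Finset.exists_mem_eq_sup' Finset.univ_nonempty (fun i => g i t)
    exact ⟨i, hi⟩
  have hle : ∀ t i, g i t ≤ f t := fun t i =>
    Finset.le_sup' (f := fun i => g i t) (Finset.mem_univ i)
  have key : ∀ t : ℝ, ∃ j, t ∈ Set.Ico (0:ℝ) T →
      f t = g j t ∧ ∃ᶠ z in 𝓝[>] t, f z = g j z := by
    intro t
    by_cases ht : t ∈ Set.Ico (0:ℝ) T
    swap
    · exact ⟨Classical.arbitrary ι, fun h => absurd h ht⟩
    have hfreq : ∃ j, ∃ᶠ z in 𝓝[>] t, f z = g j z := by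
      by_contra hcon
      push_neg at hcon
      have hever : ∀ᶠ z in 𝓝[>] t, ∀ j, f z ≠ g j z := by
        rw [Filter.eventually_all]
        intro j
        have h := hcon j
        exact h
      obtain ⟨z, hz⟩ := hever.exists
      obtain ⟨j, hj⟩ := hattain z
      exact hz j hj
    obtain ⟨j, hj⟩ := hfreq
    refine ⟨j, fun _ => ⟨?_, hj⟩⟩
    have hmemIcc : t ∈ Set.Icc (0:ℝ) T := ⟨ht.1, ht.2.le⟩
    have h1 : Tendsto f (𝓝[>] t) (𝓝 (f t)) :=
      ((hfca t hmemIcc).tendsto).mono_left nhdsWithin_le_nhds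
    have h2 : Tendsto (g j) (𝓝[>] t) (𝓝 (g j t)) :=
      ((hgc j t hmemIcc).tendsto).mono_left nhdsWithin_le_nhds
    exact tendsto_nhds_unique_of_frequently_eq h1 h2 hj
  choose J hJ using key
  set φ : ℝ → ℝ := fun t => g' (J t) t with hφdef
  -- the fencing estimate for every small ε
  have main : ∀ ε : ℝ, 0 < ε → ε ≤ Real.exp (-(K+1) * T) →
      ∀ t ∈ Set.Icc (0:ℝ) T, f t ≤ ε * Real.exp ((K+1) * t) := by
    intro ε hε hεT
    have hB : ∀ x : ℝ, HasDerivAt (fun t => ε * Real.exp ((K+1) * t))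
        ((K+1) * (ε * Real.exp ((K+1) * x))) x := by
      intro x
      have h1 : HasDerivAt (fun t : ℝ => (K+1) * t) (K+1) x := by
        simpa using (hasDerivAt_id x).const_mul (K+1)
      have h2 := (Real.hasDerivAt_exp ((K+1) * x)).comp x h1
      have h3 := h2.const_mul ε
      exact h3.congr_deriv (by ring)
    refine image_le_of_liminf_slope_right_lt_deriv_boundary (f' := φ) hfc ?_ ?_ hB ?_
    · -- liminf slope ≤ φ
      intro x hx r hr
      obtain ⟨hJ1, hJ2⟩ := hJ x hx
      have hmemIcc : x ∈ Set.Icc (0:ℝ) T := ⟨hx.1, hx.2.le⟩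
      have hslope : Tendsto (slope (g (J x)) x) (𝓝[>] x) (𝓝 (g' (J x) x)) :=
        (hasDerivAt_iff_tendsto_slope.1 (hg (J x) x hmemIcc)).mono_left
          (nhdsWithin_mono x fun z hz => ne_of_gt hz)
      have hev : ∀ᶠ z in 𝓝[>] x, slope (g (J x)) x z < r := hslope.eventually_lt_const hr
      refine (hJ2.and_eventually hev).mono ?_
      rintro z ⟨hz1, hz2⟩
      simp only [slope_def_field] at hz2 ⊢
      rw [hz1, hJ1]
      exact hz2
    · -- f 0 ≤ B 0
      calc f 0 ≤ 0 := by
            obtain ⟨i, hi⟩ := hattain 0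
            rw [hi]; exact h0 i
        _ ≤ ε * Real.exp ((K+1) * 0) := by positivity
    · -- at touching points, φ x < B' x
      intro x hx hfx
      obtain ⟨hJ1, hJ2⟩ := hJ x hx
      have hBpos : 0 < ε * Real.exp ((K+1) * x) := by positivity
      have hgx : 0 < g (J x) x := by rw [← hJ1, hfx]; exact hBpos
      have hgx1 : g (J x) x ≤ 1 := by
        rw [← hJ1, hfx]
        calc ε * Real.exp ((K+1) * x) ≤ Real.exp (-(K+1) * T) * Real.exp ((K+1) * x) := by
              apply mul_le_mul_of_nonneg_right hεT (Real.exp_nonneg _)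
          _ = Real.exp (-(K+1) * T + (K+1) * x) := (Real.exp_add _ _).symm
          _ ≤ Real.exp 0 := by
              apply Real.exp_le_exp.2
              nlinarith [hx.1, hx.2.le, hK]
          _ = 1 := Real.exp_zero
      have hmax : ∀ j, g j x ≤ g (J x) x := fun j => (hle x j).trans_eq hJ1
      have hder := hb x hx (J x) hmax hgx hgx1
      calc φ x ≤ K * g (J x) x := hder
        _ < (K+1) * g (J x) x := by nlinarith
        _ = (K+1) * (ε * Real.exp ((K+1) * x)) := by rw [← hJ1, hfx]
  -- let ε → 0
  intro t ht i
  refine le_of_forall_pos_le_add fun η hη => ?_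
  have hexp : 0 < Real.exp ((K+1) * t) := Real.exp_pos _
  set ε := min (Real.exp (-(K+1) * T)) (η / Real.exp ((K+1) * t)) with hεdef
  have hε : 0 < ε := lt_min (Real.exp_pos _) (by positivity)
  have hft := main ε hε (min_le_left _ _) t ht
  have : f t ≤ η := by
    calc f t ≤ ε * Real.exp ((K+1) * t) := hft
      _ ≤ (η / Real.exp ((K+1) * t)) * Real.exp ((K+1) * t) :=
          mul_le_mul_of_nonneg_right (min_le_right _ _) hexp.le
      _ = η := by field_simp
  calc g i t ≤ f t := hle t i
    _ ≤ η := this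
    _ = 0 + η := (zero_add η).symm

lemma d_mono {n m : ℕ} {wl wu : Fin m → ℝ}
    {F : (Fin n → ℝ) → (Fin m → ℝ) → (Fin n → ℝ)}
    {d : (Fin n → ℝ) → (Fin m → ℝ) → (Fin n → ℝ) → (Fin m → ℝ) → (Fin n → ℝ)}
    (hd : IsDecompositionFunction wl wu F d)
    (i : Fin n) {x x' xh xh' : Fin n → ℝ} {w w' wh wh' : Fin m → ℝ}
    (hxx' : x ≤ x') (hi : x i = x' i) (hxh : xh' ≤ xh)
    (hw : w ≤ w') (hwh : wh' ≤ wh)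
    (hwm : w ∈ Set.Icc wl wu) (hw'm : w' ∈ Set.Icc wl wu)
    (hwhm : wh ∈ Set.Icc wl wu) (hwh'm : wh' ∈ Set.Icc wl wu) :
    d x w xh wh i ≤ d x' w' xh' wh' i := by
  obtain ⟨hlip, hdiag, hd3, hd4, hd5, hd6⟩ := hd
  have s1 : d x w xh wh i ≤ d x' w xh wh i := by
    apply update_chain_mono (fun y => d y w xh wh i) x x' x x'
      ⟨le_rfl, hxx'⟩ ⟨hxx', le_rfl⟩ hxx' {i} (fun j hj => by rw [Set.mem_singleton_iff] at hj; rw [hj]; exact hi)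
    intro j hj y _ s t _ hst _
    exact hd3 i j (by simpa using hj) y xh s t hst w hwm wh hwhm
  have s2 : d x' w xh wh i ≤ d x' w xh' wh i := by
    have := update_chain_mono (fun y => -(d x' w y wh i)) xh' xh xh' xh
      ⟨le_rfl, hxh⟩ ⟨hxh, le_rfl⟩ hxh ∅ (fun j hj => absurd hj (Set.notMem_empty j))
      (fun j _ y _ s t _ hst _ => by
        simp only [neg_le_neg_iff]
        exact hd4 i j x' y s t hst w hwm wh hwhm)
    linarith
  have s3 : d x' w xh' wh i ≤ d x' w' xh' wh i := by
    apply update_chain_mono (fun v => d x' v xh' wh i) wl wu w w' hwm hw'm hw ∅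
      (fun j hj => absurd hj (Set.notMem_empty j))
    intro j _ y hy s t h1 h2 h3
    exact hd5 i j x' xh' s t h1 h2 h3 y hy wh hwhm
  have s4 : d x' w' xh' wh i ≤ d x' w' xh' wh' i := by
    have := update_chain_mono (fun v => -(d x' w' xh' v i)) wl wu wh' wh hwh'm hwhm hwh ∅
      (fun j hj => absurd hj (Set.notMem_empty j))
      (fun j _ y hy s t h1 h2 h3 => by
        simp only [neg_le_neg_iff]
        exact hd6 i j x' xh' s t h1 h2 h3 w' hw'm y hy)
    linarith
  linarith

section Comparison

variable {n m : ℕ} {wl wu : Fin m → ℝ}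
    {F : (Fin n → ℝ) → (Fin m → ℝ) → (Fin n → ℝ)}
    {d : (Fin n → ℝ) → (Fin m → ℝ) → (Fin n → ℝ) → (Fin m → ℝ) → (Fin n → ℝ)}

lemma lip_bound (hd : IsDecompositionFunction wl wu F d) {C : Set (((Fin n → ℝ) × (Fin m → ℝ)) × ((Fin n → ℝ) × (Fin m → ℝ)))}
    (hC : IsCompact C) :
    ∃ K : ℝ, 0 ≤ K ∧ ∀ p ∈ C, ∀ q ∈ C, ∀ i,
      d p.1.1 p.1.2 p.2.1 p.2.2 i - d q.1.1 q.1.2 q.2.1 q.2.2 i ≤ K * dist p q := by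
  obtain ⟨K, hK0, hK⟩ := locallyLipschitz_lipschitzOn_compact hd.1 hC
  refine ⟨K, hK0, fun p hp q hq i => ?_⟩
  have h1 := hK p hp q hq
  have h2 := dist_le_pi_dist (d p.1.1 p.1.2 p.2.1 p.2.2) (d q.1.1 q.1.2 q.2.1 q.2.2) i
  rw [Real.dist_eq] at h2
  have := abs_le.1 (h2.trans h1)
  linarith [this.2]

/-- points of the tube around a trajectory -/
lemma tube_mem {x : ℝ → Fin n → ℝ} {T t μ : ℝ} (ht : t ∈ Set.Icc (0:ℝ) T) (hμ0 : 0 ≤ μ)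
    (hμ1 : μ ≤ 1) (v : Fin n → ℝ) (hv : dist v (x t) ≤ μ) :
    v ∈ Metric.cthickening 1 (x '' Set.Icc 0 T) :=
  Metric.mem_cthickening_of_dist_le v (x t) 1 _ ⟨t, ht, rfl⟩ (hv.trans hμ1)

lemma dist_shift {x : Fin n → ℝ} {μ : ℝ} (hμ : 0 ≤ μ) :
    dist (fun j => x j + μ) x ≤ μ ∧ dist (fun j => x j - μ) x ≤ μ := by
  constructor <;>
  · rw [dist_pi_le_iff hμ]
    intro j
    rw [Real.dist_eq]
    simp [abs_of_nonneg hμ, abs_of_nonpos (neg_nonpos.2 hμ)]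

lemma comparison (hwlu : wl ≤ wu) (hd : IsDecompositionFunction wl wu F d) (hn : 0 < n)
    (T : ℝ) (a ah x : ℝ → Fin n → ℝ) (w : ℝ → Fin m → ℝ)
    (ha : ∀ t ∈ Set.Icc (0:ℝ) T, HasDerivAt a (d (a t) wl (ah t) wu) t)
    (hah : ∀ t ∈ Set.Icc (0:ℝ) T, HasDerivAt ah (d (ah t) wu (a t) wl) t)
    (hw : ∀ t ∈ Set.Icc (0:ℝ) T, w t ∈ Set.Icc wl wu)
    (hx : ∀ t ∈ Set.Icc (0:ℝ) T, HasDerivAt x (F (x t) (w t)) t)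
    (h0l : a 0 ≤ x 0) (h0u : x 0 ≤ ah 0) :
    ∀ t ∈ Set.Icc (0:ℝ) T, a t ≤ x t ∧ x t ≤ ah t := by
  haveI : Nonempty (Fin n) := ⟨⟨0, hn⟩⟩
  have hwlm : wl ∈ Set.Icc wl wu := ⟨le_rfl, hwlu⟩
  have hwum : wu ∈ Set.Icc wl wu := ⟨hwlu, le_rfl⟩
  -- compact tube around x
  have hxc : ContinuousOn x (Set.Icc 0 T) := fun t ht => (hx t ht).continuousAt.continuousWithinAt
  have himg : IsCompact (x '' Set.Icc 0 T) := (isCompact_Icc).image_of_continuousOn hxc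
  set Kx : Set (Fin n → ℝ) := Metric.cthickening 1 (x '' Set.Icc 0 T) with hKx
  have hKxc : IsCompact Kx := himg.cthickening
  set C : Set (((Fin n → ℝ) × (Fin m → ℝ)) × ((Fin n → ℝ) × (Fin m → ℝ))) :=
    (Kx ×ˢ Set.Icc wl wu) ×ˢ (Kx ×ˢ Set.Icc wl wu) with hC
  have hCc : IsCompact C := ((hKxc.prod isCompact_Icc).prod (hKxc.prod isCompact_Icc))
  obtain ⟨K, hK0, hK⟩ := lip_bound hd hCc
  -- set up the Gronwall data
  set g : (Fin n ⊕ Fin n) → ℝ → ℝ := fun i t => Sum.elim (fun i => a t i - x t i)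
    (fun i => x t i - ah t i) i with hg
  set g' : (Fin n ⊕ Fin n) → ℝ → ℝ := fun i t => Sum.elim
    (fun i => d (a t) wl (ah t) wu i - F (x t) (w t) i)
    (fun i => F (x t) (w t) i - d (ah t) wu (a t) wl i) i with hg'
  have hgron := max_gronwall g g' T K hK0 ?_ ?_ ?_
  · intro t ht
    constructor
    · intro i
      have := hgron t ht (Sum.inl i)
      simp only [hg, Sum.elim_inl] at this
      linarith
    · intro i
      have := hgron t ht (Sum.inr i)
      simp only [hg, Sum.elim_inr] at this
      linarith
  · -- derivatives
    rintro (i | i) t ht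
    · exact ((hasDerivAt_pi.1 (ha t ht)) i).sub ((hasDerivAt_pi.1 (hx t ht)) i)
    · exact ((hasDerivAt_pi.1 (hx t ht)) i).sub ((hasDerivAt_pi.1 (hah t ht)) i)
  · rintro (i | i)
    · show a 0 i - x 0 i ≤ 0
      linarith [h0l i]
    · show x 0 i - ah 0 i ≤ 0
      linarith [h0u i]
  · -- the derivative bound at maximizing indices
    rintro t ht (i | i) hmax hpos h1
    · simp only [hg, Sum.elim_inl] at hpos h1 hmax
      set μ := a t i - x t i with hμ
      have htIcc : t ∈ Set.Icc (0:ℝ) T := ⟨ht.1, ht.2.le⟩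
      have hwt := hw t htIcc
      set p : Fin n → ℝ := fun j => x t j + μ with hp
      set q : Fin n → ℝ := fun j => x t j - μ with hq
      have step1 : d (a t) wl (ah t) wu i ≤ d p (w t) q (w t) i := by
        apply d_mono hd i ?_ ?_ ?_ hwt.1 hwt.2 hwlm hwt hwum hwt
        · intro j
          have := hmax (Sum.inl j)
          simp only [hg, Sum.elim_inl] at this
          simp only [hp]
          linarith
        · simp only [hp, hμ]; ring
        · intro j
          have := hmax (Sum.inr j)
          simp only [hg, Sum.elim_inr] at this
          simp only [hq]
          linarith
      obtain ⟨hdp, hdq⟩ := dist_shift (x := x t) hpos.le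
      have hP1 : ((p, w t), (q, w t)) ∈ C := by
        refine ⟨⟨?_, hwt⟩, ⟨?_, hwt⟩⟩
        · exact tube_mem htIcc hpos.le h1 p hdp
        · exact tube_mem htIcc hpos.le h1 q hdq
      have hP2 : ((x t, w t), (x t, w t)) ∈ C := by
        refine ⟨⟨?_, hwt⟩, ⟨?_, hwt⟩⟩ <;>
          exact tube_mem htIcc hpos.le h1 (x t) (by rw [dist_self]; exact hpos.le)
      have step2 := hK _ hP1 _ hP2 i
      have hdist : dist (((p, w t), (q, w t)) : ((Fin n → ℝ) × (Fin m → ℝ)) × ((Fin n → ℝ) × (Fin m → ℝ)))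
          ((x t, w t), (x t, w t)) ≤ μ := by
        rw [Prod.dist_eq]
        apply max_le <;> rw [Prod.dist_eq] <;> apply max_le
        · exact hdp
        · rw [dist_self]; exact hpos.le
        · exact hdq
        · rw [dist_self]; exact hpos.le
      have step2' : d p (w t) q (w t) i - d (x t) (w t) (x t) (w t) i ≤ K * μ := by
        refine step2.trans (mul_le_mul_of_nonneg_left hdist hK0)
      have hdiag : d (x t) (w t) (x t) (w t) i = F (x t) (w t) i := by
        rw [hd.2.1 (x t) (w t) hwt]
      simp only [hg, hg', Sum.elim_inl]
      rw [← hμ]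
      linarith [step1, step2', hdiag]
    · simp only [hg, Sum.elim_inr] at hpos h1 hmax
      set μ := x t i - ah t i with hμ
      have htIcc : t ∈ Set.Icc (0:ℝ) T := ⟨ht.1, ht.2.le⟩
      have hwt := hw t htIcc
      set p : Fin n → ℝ := fun j => x t j + μ with hp
      set q : Fin n → ℝ := fun j => x t j - μ with hq
      have step1 : d q (w t) p (w t) i ≤ d (ah t) wu (a t) wl i := by
        apply d_mono hd i ?_ ?_ ?_ hwt.2 hwt.1 hwt hwum hwt hwlm
        · intro j
          have := hmax (Sum.inr j)
          simp only [hg, Sum.elim_inr] at this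
          simp only [hq]
          linarith
        · simp only [hq, hμ]; ring
        · intro j
          have := hmax (Sum.inl j)
          simp only [hg, Sum.elim_inl] at this
          simp only [hp]
          linarith
      obtain ⟨hdp, hdq⟩ := dist_shift (x := x t) hpos.le
      have hP1 : ((q, w t), (p, w t)) ∈ C := by
        refine ⟨⟨?_, hwt⟩, ⟨?_, hwt⟩⟩
        · exact tube_mem htIcc hpos.le h1 q hdq
        · exact tube_mem htIcc hpos.le h1 p hdp
      have hP2 : ((x t, w t), (x t, w t)) ∈ C := by
        refine ⟨⟨?_, hwt⟩, ⟨?_, hwt⟩⟩ <;>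
          exact tube_mem htIcc hpos.le h1 (x t) (by rw [dist_self]; exact hpos.le)
      have step2 := hK _ hP2 _ hP1 i
      have hdist : dist ((((x t, w t), (x t, w t))) : ((Fin n → ℝ) × (Fin m → ℝ)) × ((Fin n → ℝ) × (Fin m → ℝ)))
          ((q, w t), (p, w t)) ≤ μ := by
        rw [Prod.dist_eq]
        apply max_le <;> rw [Prod.dist_eq] <;> apply max_le
        · rw [dist_comm]; exact hdq
        · rw [dist_self]; exact hpos.le
        · rw [dist_comm]; exact hdp
        · rw [dist_self]; exact hpos.le
      have step2' : d (x t) (w t) (x t) (w t) i - d q (w t) p (w t) i ≤ K * μ := by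
        refine step2.trans (mul_le_mul_of_nonneg_left hdist hK0)
      have hdiag : d (x t) (w t) (x t) (w t) i = F (x t) (w t) i := by
        rw [hd.2.1 (x t) (w t) hwt]
      simp only [hg, hg', Sum.elim_inr]
      rw [← hμ]
      linarith [step1, step2', hdiag]

end Comparison

section Comparison2

variable {n m : ℕ} {wl wu : Fin m → ℝ}
    {F : (Fin n → ℝ) → (Fin m → ℝ) → (Fin n → ℝ)}
    {d : (Fin n → ℝ) → (Fin m → ℝ) → (Fin n → ℝ) → (Fin m → ℝ) → (Fin n → ℝ)}

lemma comparison2 (hwlu : wl ≤ wu) (hd : IsDecompositionFunction wl wu F d) (hn : 0 < n)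
    (T : ℝ) (a ah : ℝ → Fin n → ℝ)
    (ha : ∀ t ∈ Set.Icc (0:ℝ) T, HasDerivAt a (d (a t) wl (ah t) wu) t)
    (hah : ∀ t ∈ Set.Icc (0:ℝ) T, HasDerivAt ah (d (ah t) wu (a t) wl) t)
    (h0 : a 0 ≤ ah 0) :
    ∀ t ∈ Set.Icc (0:ℝ) T, a t ≤ ah t := by
  haveI : Nonempty (Fin n) := ⟨⟨0, hn⟩⟩
  have hwlm : wl ∈ Set.Icc wl wu := ⟨le_rfl, hwlu⟩
  have hwum : wu ∈ Set.Icc wl wu := ⟨hwlu, le_rfl⟩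
  have hac : ContinuousOn a (Set.Icc 0 T) := fun t ht => (ha t ht).continuousAt.continuousWithinAt
  have hahc : ContinuousOn ah (Set.Icc 0 T) :=
    fun t ht => (hah t ht).continuousAt.continuousWithinAt
  have himga : IsCompact (a '' Set.Icc 0 T) := (isCompact_Icc).image_of_continuousOn hac
  have himgah : IsCompact (ah '' Set.Icc 0 T) := (isCompact_Icc).image_of_continuousOn hahc
  set Ka : Set (Fin n → ℝ) := Metric.cthickening 1 (a '' Set.Icc 0 T) with hKa
  set Kah : Set (Fin n → ℝ) := Metric.cthickening 1 (ah '' Set.Icc 0 T) with hKah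
  set C : Set (((Fin n → ℝ) × (Fin m → ℝ)) × ((Fin n → ℝ) × (Fin m → ℝ))) :=
    (Kah ×ˢ Set.Icc wl wu) ×ˢ (Ka ×ˢ Set.Icc wl wu) with hC
  have hCc : IsCompact C :=
    ((himgah.cthickening.prod isCompact_Icc).prod (himga.cthickening.prod isCompact_Icc))
  obtain ⟨K, hK0, hK⟩ := lip_bound hd hCc
  set g : Fin n → ℝ → ℝ := fun i t => a t i - ah t i with hg
  set g' : Fin n → ℝ → ℝ := fun i t => d (a t) wl (ah t) wu i - d (ah t) wu (a t) wl i with hg'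
  have hgron := max_gronwall g g' T K hK0 ?_ ?_ ?_
  · intro t ht i
    have := hgron t ht i
    simp only [hg] at this
    linarith
  · intro i t ht
    exact ((hasDerivAt_pi.1 (ha t ht)) i).sub ((hasDerivAt_pi.1 (hah t ht)) i)
  · intro i
    show a 0 i - ah 0 i ≤ 0
    linarith [h0 i]
  · intro t ht i hmax hpos h1
    simp only [hg] at hpos h1 hmax
    set μ := a t i - ah t i with hμ
    have htIcc : t ∈ Set.Icc (0:ℝ) T := ⟨ht.1, ht.2.le⟩
    set p : Fin n → ℝ := fun j => ah t j + μ with hp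
    set q : Fin n → ℝ := fun j => a t j - μ with hq
    have step1 : d (a t) wl (ah t) wu i ≤ d p wu q wl i := by
      apply d_mono hd i ?_ ?_ ?_ hwlu hwlu hwlm hwum hwum hwlm
      · intro j
        have := hmax j
        simp only [hp]
        linarith
      · simp only [hp, hμ]; ring
      · intro j
        have := hmax j
        simp only [hq]
        linarith
    obtain ⟨hdp, _⟩ := dist_shift (x := ah t) hpos.le
    obtain ⟨_, hdq⟩ := dist_shift (x := a t) hpos.le
    have hP1 : ((p, wu), (q, wl)) ∈ C := by
      refine ⟨⟨?_, hwum⟩, ⟨?_, hwlm⟩⟩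
      · exact tube_mem htIcc hpos.le h1 p hdp
      · exact tube_mem htIcc hpos.le h1 q hdq
    have hP2 : ((ah t, wu), (a t, wl)) ∈ C := by
      refine ⟨⟨?_, hwum⟩, ⟨?_, hwlm⟩⟩
      · exact tube_mem htIcc hpos.le h1 (ah t) (by rw [dist_self]; exact hpos.le)
      · exact tube_mem htIcc hpos.le h1 (a t) (by rw [dist_self]; exact hpos.le)
    have step2 := hK _ hP1 _ hP2 i
    have hdist : dist (((p, wu), (q, wl)) : ((Fin n → ℝ) × (Fin m → ℝ)) × ((Fin n → ℝ) × (Fin m → ℝ)))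
        ((ah t, wu), (a t, wl)) ≤ μ := by
      rw [Prod.dist_eq]
      apply max_le <;> rw [Prod.dist_eq] <;> apply max_le
      · exact hdp
      · rw [dist_self]; exact hpos.le
      · exact hdq
      · rw [dist_self]; exact hpos.le
    have step2' : d p wu q wl i - d (ah t) wu (a t) wl i ≤ K * μ :=
      step2.trans (mul_le_mul_of_nonneg_left hdist hK0)
    simp only [hg, hg']
    rw [← hμ]
    linarith [step1, step2']

end Comparison2

lemma deriv_limit_eq_zero (a g : ℝ → ℝ) (L c : ℝ)
    (ha : ∀ t ∈ Set.Ici (0:ℝ), HasDerivAt a (g t) t)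
    (hL : Tendsto a atTop (𝓝 L)) (hc : Tendsto g atTop (𝓝 c)) : c = 0 := by
  by_contra hne
  have habs : 0 < |c| := abs_pos.2 hne
  have h1 : ∀ᶠ t in atTop, |g t - c| < |c| / 4 := by
    have := Metric.tendsto_atTop.1 hc (|c| / 4) (by positivity)
    obtain ⟨N, hN⟩ := this
    exact Filter.eventually_atTop.2 ⟨N, fun t ht => by
      have := hN t ht; rwa [Real.dist_eq] at this⟩
  have h2 : ∀ᶠ t in atTop, |a t - L| < |c| / 16 := by
    obtain ⟨N, hN⟩ := Metric.tendsto_atTop.1 hL (|c| / 16) (by positivity)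
    exact Filter.eventually_atTop.2 ⟨N, fun t ht => by
      have := hN t ht; rwa [Real.dist_eq] at this⟩
  obtain ⟨N1, hN1⟩ := Filter.eventually_atTop.1 h1
  obtain ⟨N2, hN2⟩ := Filter.eventually_atTop.1 h2
  set T := max 0 (max N1 N2) with hT
  have hT0 : (0:ℝ) ≤ T := le_max_left _ _
  have hmvt := exists_hasDerivAt_eq_slope a g (by linarith : T < T + 1)
    (fun t ht => (ha t (Set.mem_Ici.2 (le_trans hT0 ht.1))).continuousAt.continuousWithinAt)
    (fun t ht => ha t (Set.mem_Ici.2 (le_trans hT0 ht.1.le)))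
  obtain ⟨ξ, hξmem, hξ⟩ := hmvt
  have hξT : ξ ≥ N1 := le_trans (le_trans (le_max_left N1 N2) (le_max_right 0 _)) hξmem.1.le
  have hslope : g ξ = a (T + 1) - a T := by
    rw [hξ]; field_simp; ring
  have hb1 := hN1 ξ hξT
  have hb2 := hN2 (T + 1) (by
    have : N2 ≤ T := le_trans (le_max_right N1 N2) (le_max_right 0 _)
    linarith)
  have hb3 := hN2 T (le_trans (le_max_right N1 N2) (le_max_right 0 _))
  have e1 := abs_sub_abs_le_abs_sub (g ξ) c
  rw [abs_sub_comm] at e1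
  have e2 : |a (T+1) - a T| ≤ |a (T+1) - L| + |a T - L| := by
    have := abs_sub (a (T+1) - L) (a T - L)
    calc |a (T+1) - a T| = |(a (T+1) - L) - (a T - L)| := by ring_nf
      _ ≤ |a (T+1) - L| + |a T - L| := abs_sub _ _
  rw [hslope] at e1 hb1
  -- |c| ≤ |c - gξ| + |gξ| < |c|/4 + |c|/16+|c|/16
  have : |c| ≤ |c - (a (T+1) - a T)| + |a (T+1) - a T| := by
    calc |c| = |(c - (a (T+1) - a T)) + (a (T+1) - a T)| := by ring_nf
      _ ≤ _ := abs_add_le _ _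
  rw [abs_sub_comm] at hb1
  linarith

end AuxiliaryLemmas

/-- Theorem 1, Part 3: with `(x_eq, x̂_eq)` the limit of the embedding
solution started in `𝒮`, the hyperrectangle `[x_eq, x̂_eq]` is robustly forward invariant
for `ẋ = F(x, w)` and is attractive from `[a(0), â(0)]`. -/
theorem thm1_part3_invariant_and_attractive
    {n m : ℕ} (wl wu : Fin m → ℝ) (hwlu : wl ≤ wu)
    (F : (Fin n → ℝ) → (Fin m → ℝ) → (Fin n → ℝ))
    (d : (Fin n → ℝ) → (Fin m → ℝ) → (Fin n → ℝ) → (Fin m → ℝ) → (Fin n → ℝ))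
    (hd : IsDecompositionFunction wl wu F d)
    -- (a, ah) solves the deterministic embedding ODE on [0, ∞)
    (a ah : ℝ → (Fin n → ℝ))
    (ha : ∀ t ∈ Set.Ici (0:ℝ), HasDerivAt a (d (a t) wl (ah t) wu) t)
    (hah : ∀ t ∈ Set.Ici (0:ℝ), HasDerivAt ah (d (ah t) wu (a t) wl) t)
    -- (a 0, ah 0) ∈ 𝒮
    (h0tri : a 0 ≤ ah 0)
    (h0SE : (0 : Fin n → ℝ) ≤ d (a 0) wl (ah 0) wu ∧ d (ah 0) wu (a 0) wl ≤ (0 : Fin n → ℝ))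
    -- (xeq, xheq) is the limit of the embedding solution
    (xeq xheq : Fin n → ℝ)
    (hlim : Filter.Tendsto a Filter.atTop (nhds xeq))
    (hlimh : Filter.Tendsto ah Filter.atTop (nhds xheq)) :
    -- [xeq, xheq] is robustly forward invariant for ẋ = F(x, w)
    (∀ T : ℝ, 0 ≤ T →
      ∀ (x : ℝ → (Fin n → ℝ)) (w : ℝ → (Fin m → ℝ)),
        (∀ t ∈ Set.Icc (0:ℝ) T, w t ∈ Set.Icc wl wu) →
        PiecewiseContinuousOn w (Set.Icc 0 T) →
        (∀ t ∈ Set.Icc (0:ℝ) T, HasDerivAt x (F (x t) (w t)) t) →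
        x 0 ∈ Set.Icc xeq xheq →
        ∀ t ∈ Set.Icc (0:ℝ) T, x t ∈ Set.Icc xeq xheq) ∧
    -- [xeq, xheq] is attractive from [a 0, ah 0]
    (∀ (x : ℝ → (Fin n → ℝ)) (w : ℝ → (Fin m → ℝ)),
      (∀ t ∈ Set.Ici (0:ℝ), w t ∈ Set.Icc wl wu) →
      PiecewiseContinuousOn w (Set.Ici 0) →
      (∀ t ∈ Set.Ici (0:ℝ), HasDerivAt x (F (x t) (w t)) t) →
      x 0 ∈ Set.Icc (a 0) (ah 0) →
      ∀ U : Set (Fin n → ℝ), IsOpen U → Set.Icc xeq xheq ⊆ U →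
        ∃ T : ℝ, 0 < T ∧ ∀ t : ℝ, T ≤ t → x t ∈ U) := by
  rcases Nat.eq_zero_or_pos n with hn0 | hn
  · subst hn0
    constructor
    · intro T hT x w hwm hpc hx hx0 t ht
      exact ⟨fun j => j.elim0, fun j => j.elim0⟩
    · intro x w hwm hpc hx hx0 U hU hUsub
      exact ⟨1, one_pos, fun t ht => hUsub ⟨fun j => j.elim0, fun j => j.elim0⟩⟩
  -- equilibrium property
  have hcont : Continuous (fun p : ((Fin n → ℝ) × (Fin m → ℝ)) × ((Fin n → ℝ) × (Fin m → ℝ)) =>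
      d p.1.1 p.1.2 p.2.1 p.2.2) := hd.1.continuous
  have htends : Tendsto (fun t => d (a t) wl (ah t) wu) atTop (𝓝 (d xeq wl xheq wu)) := by
    have h1 : Tendsto (fun t => (((a t), wl), ((ah t), wu))) atTop
        (𝓝 (((xeq, wl), (xheq, wu)))) :=
      (hlim.prodMk_nhds tendsto_const_nhds).prodMk_nhds (hlimh.prodMk_nhds tendsto_const_nhds)
    exact (hcont.tendsto _).comp h1
  have htends2 : Tendsto (fun t => d (ah t) wu (a t) wl) atTop (𝓝 (d xheq wu xeq wl)) := by
    have h1 : Tendsto (fun t => (((ah t), wu), ((a t), wl))) atTop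
        (𝓝 (((xheq, wu), (xeq, wl)))) :=
      (hlimh.prodMk_nhds tendsto_const_nhds).prodMk_nhds (hlim.prodMk_nhds tendsto_const_nhds)
    exact (hcont.tendsto _).comp h1
  have heq1 : d xeq wl xheq wu = 0 := by
    funext i
    show d xeq wl xheq wu i = (0 : ℝ)
    apply deriv_limit_eq_zero (fun t => a t i) (fun t => d (a t) wl (ah t) wu i) (xeq i)
    · exact fun t ht => (hasDerivAt_pi.1 (ha t ht)) i
    · exact (tendsto_pi_nhds.1 hlim) i
    · exact (tendsto_pi_nhds.1 htends) i
  have heq2 : d xheq wu xeq wl = 0 := by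
    funext i
    show d xheq wu xeq wl i = (0 : ℝ)
    apply deriv_limit_eq_zero (fun t => ah t i) (fun t => d (ah t) wu (a t) wl i) (xheq i)
    · exact fun t ht => (hasDerivAt_pi.1 (hah t ht)) i
    · exact (tendsto_pi_nhds.1 hlimh) i
    · exact (tendsto_pi_nhds.1 htends2) i
  -- xeq ≤ xheq
  have haah : ∀ t : ℝ, 0 ≤ t → a t ≤ ah t := by
    intro t ht
    exact comparison2 hwlu hd hn t a ah
      (fun s hs => ha s (Set.mem_Ici.2 hs.1)) (fun s hs => hah s (Set.mem_Ici.2 hs.1))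
      h0tri t ⟨ht, le_rfl⟩
  have hxeqle : xeq ≤ xheq := by
    intro i
    apply le_of_tendsto_of_tendsto ((tendsto_pi_nhds.1 hlim) i) ((tendsto_pi_nhds.1 hlimh) i)
    filter_upwards [eventually_ge_atTop (0:ℝ)] with t ht
    exact haah t ht i
  constructor
  · -- robust forward invariance
    intro T hT x w hwm hpc hx hx0
    have hcomp := comparison hwlu hd hn T (fun _ => xeq) (fun _ => xheq) x w
      (fun t _ => by rw [heq1]; exact hasDerivAt_const t xeq)
      (fun t _ => by rw [heq2]; exact hasDerivAt_const t xheq)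
      hwm hx hx0.1 hx0.2
    exact fun t ht => ⟨(hcomp t ht).1, (hcomp t ht).2⟩
  · -- attractivity
    intro x w hwm hpc hx hx0 U hU hUsub
    have hbetween : ∀ t : ℝ, 0 ≤ t → a t ≤ x t ∧ x t ≤ ah t := by
      intro t ht
      exact comparison hwlu hd hn t a ah x w
        (fun s hs => ha s (Set.mem_Ici.2 hs.1)) (fun s hs => hah s (Set.mem_Ici.2 hs.1))
        (fun s hs => hwm s (Set.mem_Ici.2 hs.1)) (fun s hs => hx s (Set.mem_Ici.2 hs.1))
        hx0.1 hx0.2 t ⟨ht, le_rfl⟩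
    obtain ⟨δ, hδ, hsub⟩ := (isCompact_Icc (a := xeq) (b := xheq)).exists_thickening_subset_open
      hU hUsub
    obtain ⟨N1, hN1⟩ := Metric.tendsto_atTop.1 hlim (δ/2) (by positivity)
    obtain ⟨N2, hN2⟩ := Metric.tendsto_atTop.1 hlimh (δ/2) (by positivity)
    refine ⟨max 1 (max N1 N2), lt_of_lt_of_le one_pos (le_max_left _ _), fun t ht => ?_⟩
    have ht0 : (0:ℝ) ≤ t := le_trans (by norm_num) (le_trans (le_max_left 1 _) ht)
    have ht1 : N1 ≤ t := le_trans (le_trans (le_max_left N1 N2) (le_max_right 1 _)) ht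
    have ht2 : N2 ≤ t := le_trans (le_trans (le_max_right N1 N2) (le_max_right 1 _)) ht
    have hda := hN1 t ht1
    have hdah := hN2 t ht2
    obtain ⟨hax, hxah⟩ := hbetween t ht0
    set y : Fin n → ℝ := fun i => max (xeq i) (min (x t i) (xheq i)) with hy
    have hymem : y ∈ Set.Icc xeq xheq :=
      ⟨fun i => le_max_left _ _, fun i => max_le (hxeqle i) (min_le_right _ _)⟩
    have hdxy : dist (x t) y ≤ δ/2 := by
      rw [dist_pi_le_iff (by positivity)]
      intro i
      have hai : |a t i - xeq i| ≤ δ/2 := by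
        have h := dist_le_pi_dist (a t) xeq i
        rw [Real.dist_eq] at h
        exact h.trans hda.le
      have hahi : |ah t i - xheq i| ≤ δ/2 := by
        have h := dist_le_pi_dist (ah t) xheq i
        rw [Real.dist_eq] at h
        exact h.trans hdah.le
      obtain ⟨hai1, hai2⟩ := abs_le.1 hai
      obtain ⟨hahi1, hahi2⟩ := abs_le.1 hahi
      rw [Real.dist_eq, hy]
      rcases le_total (x t i) (xeq i) with hc1 | hc1
      · have hmin : min (x t i) (xheq i) = x t i := min_eq_left (hc1.trans (hxeqle i))
        have hmaxx : max (xeq i) (min (x t i) (xheq i)) = xeq i := by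
          rw [hmin]; exact max_eq_left hc1
        simp only [hmaxx]
        rw [abs_le]
        constructor <;> linarith [hax i]
      · rcases le_total (x t i) (xheq i) with hc2 | hc2
        · have hmin : min (x t i) (xheq i) = x t i := min_eq_left hc2
          have hmaxx : max (xeq i) (min (x t i) (xheq i)) = x t i := by
            rw [hmin]; exact max_eq_right hc1
          simp only [hmaxx]
          rw [sub_self, abs_zero]
          positivity
        · have hmin : min (x t i) (xheq i) = xheq i := min_eq_right hc2
          have hmaxx : max (xeq i) (min (x t i) (xheq i)) = xheq i := by
            rw [hmin]; exact max_eq_right (hxeqle i)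
          simp only [hmaxx]
          rw [abs_le]
          constructor <;> linarith [hxah i]
    exact hsub (Metric.mem_thickening_iff.2 ⟨y, hymem, lt_of_le_of_lt hdxy (by linarith)⟩)
end

section
/- (Corollary 2) Suppose ẋ = F(x, w) is monotone: for all i ≠ j, F_i(x, w) is nondecreasing in x_j, and for all i, k, F_i(x, w) is nondecreasing in w_k. Suppose x_eq is a globally asymptotically stable equilibrium of ẋ = F(x, w̲), x̂_eq is a globally asymptotically stable equilibrium of ẋ = F(x, w̄), and x_eq ⪯ x̂_eq. Then 𝒳_eq := [x_eq, x̂_eq] is robustly forward invariant and globally attractive for ẋ = F(x, w); moreover, no hyperrectangle that is a proper subset of 𝒳_eq is robustly forward invariant for ẋ = F(x, w). -/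
open Set Function Filter Topology

/-- A set `A ⊆ ℝⁿ` is robustly forward invariant for `ẋ = F(x, w)` with disturbances
valued in `𝒲 = Set.Icc wl wu`. -/
def RobustlyForwardInvariant {n m : ℕ} (wl wu : Fin m → ℝ)
    (F : (Fin n → ℝ) → (Fin m → ℝ) → (Fin n → ℝ)) (A : Set (Fin n → ℝ)) : Prop :=
  ∀ T : ℝ, 0 ≤ T →
    ∀ (x : ℝ → (Fin n → ℝ)) (w : ℝ → (Fin m → ℝ)),
      (∀ t ∈ Set.Icc (0:ℝ) T, w t ∈ Set.Icc wl wu) →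
      PiecewiseContinuousOn w (Set.Icc 0 T) →
      (∀ t ∈ Set.Icc (0:ℝ) T, HasDerivAt x (F (x t) (w t)) t) →
      x 0 ∈ A → ∀ t ∈ Set.Icc (0:ℝ) T, x t ∈ A



/-- Coordinatewise monotonicity (off coordinate `i`) implies joint monotonicity when the
`i`-th coordinates agree. -/
lemma monoAux {n : ℕ} (g : (Fin n → ℝ) → ℝ) (i : Fin n)
    (h : ∀ j : Fin n, j ≠ i → ∀ (x : Fin n → ℝ) (s t : ℝ), s ≤ t →
      g (Function.update x j s) ≤ g (Function.update x j t))
    (a b : Fin n → ℝ) (hab : ∀ j, a j ≤ b j) (hi : a i = b i) : g a ≤ g b := by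
  have main : ∀ S : Finset (Fin n), g a ≤ g (fun j => if j ∈ S then b j else a j) := by
    intro S
    induction S using Finset.induction_on with
    | empty => simp
    | @insert k S hk ih =>
      set c : Fin n → ℝ := fun j => if j ∈ S then b j else a j with hc
      have hins : (fun j => if j ∈ insert k S then b j else a j) = Function.update c k (b k) := by
        funext j
        by_cases hjk : j = k
        · subst hjk; simp [Function.update, c]
        · simp [Function.update, hjk, Finset.mem_insert, c]
      have hcself : c = Function.update c k (a k) := by
        funext j
        by_cases hjk : j = k
        · subst hjk; simp [Function.update, c, hk]
        · simp [Function.update, hjk]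
      by_cases hki : k = i
      · subst hki
        have : Function.update c k (b k) = c := by rw [← hi, ← hcself]
        rw [hins, this]; exact ih
      · calc g a ≤ g c := ih
          _ = g (Function.update c k (a k)) := by rw [← hcself]
          _ ≤ g (Function.update c k (b k)) := h k hki c (a k) (b k) (hab k)
          _ = g (fun j => if j ∈ insert k S then b j else a j) := by rw [hins]
  have := main Finset.univ
  simpa using this

/-- Coordinatewise monotonicity in the disturbance implies joint monotonicity on the box. -/
lemma monoWAux {m : ℕ} (wl wu : Fin m → ℝ) (g : (Fin m → ℝ) → ℝ)
    (h : ∀ (k : Fin m) (x : Fin m → ℝ) (s t : ℝ), wl k ≤ s → s ≤ t → t ≤ wu k →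
      g (Function.update x k s) ≤ g (Function.update x k t))
    (a b : Fin m → ℝ) (ha : a ∈ Set.Icc wl wu) (hb : b ∈ Set.Icc wl wu) (hab : a ≤ b) :
    g a ≤ g b := by
  have main : ∀ S : Finset (Fin m), g a ≤ g (fun j => if j ∈ S then b j else a j) := by
    intro S
    induction S using Finset.induction_on with
    | empty => simp
    | @insert k S hk ih =>
      set c : Fin m → ℝ := fun j => if j ∈ S then b j else a j with hc
      have hins : (fun j => if j ∈ insert k S then b j else a j) = Function.update c k (b k) := by
        funext j
        by_cases hjk : j = k
        · subst hjk; simp [Function.update, c]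
        · simp [Function.update, hjk, Finset.mem_insert, c]
      have hcself : c = Function.update c k (a k) := by
        funext j
        by_cases hjk : j = k
        · subst hjk; simp [Function.update, c, hk]
        · simp [Function.update, hjk]
      calc g a ≤ g c := ih
        _ = g (Function.update c k (a k)) := by rw [← hcself]
        _ ≤ g (Function.update c k (b k)) :=
          h k c (a k) (b k) (ha.1 k) (hab k) (hb.2 k)
        _ = g (fun j => if j ∈ insert k S then b j else a j) := by rw [hins]
  have := main Finset.univ
  simpa using this

lemma derivComp {n : ℕ} (x : ℝ → Fin n → ℝ) (v : Fin n → ℝ) (t : ℝ) (i : Fin n)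
    (hx : HasDerivAt x v t) : HasDerivAt (fun s => x s i) (v i) t := by
  have h := ((ContinuousLinearMap.proj (R := ℝ) (φ := fun _ : Fin n => ℝ) i).hasFDerivAt).comp t
    hx.hasFDerivAt
  have := h.hasDerivAt
  exact hasDerivAt_pi.1 hx i

/-- Core comparison lemma: if at every time `t ∈ [0,T]` and every coordinate `i` maximizing
`z t i - x t i` with nonnegative gap, the derivative gap satisfies a one-sided Lipschitz
bound, and initially `z 0 ≤ x 0`, then `z t ≤ x t` on `[0,T]`. -/
lemma compCore {n : ℕ} (hn : 0 < n) (T : ℝ) (K : ℝ) (hK : 0 ≤ K)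
    (x z : ℝ → Fin n → ℝ) (fx fz : ℝ → Fin n → ℝ)
    (hx : ∀ t ∈ Set.Icc (0:ℝ) T, HasDerivAt x (fx t) t)
    (hz : ∀ t ∈ Set.Icc (0:ℝ) T, HasDerivAt z (fz t) t)
    (key : ∀ t ∈ Set.Icc (0:ℝ) T, ∀ i : Fin n, 0 ≤ z t i - x t i →
      (∀ j, z t j - x t j ≤ z t i - x t i) →
      fz t i - fx t i ≤ K * (z t i - x t i))
    (h0 : z 0 ≤ x 0) : ∀ t ∈ Set.Icc (0:ℝ) T, z t ≤ x t := by
  haveI : Nonempty (Fin n) := ⟨⟨0, hn⟩⟩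
  have hne : (Finset.univ : Finset (Fin n)).Nonempty := Finset.univ_nonempty
  set g : Fin n → ℝ → ℝ := fun i t => z t i - x t i with hg
  set f : ℝ → ℝ := fun t => (Finset.univ.sup' hne fun i => g i t) ⊔ 0 with hf
  have hgd : ∀ t ∈ Set.Icc (0:ℝ) T, ∀ i, HasDerivAt (g i) (fz t i - fx t i) t := by
    intro t ht i
    exact (derivComp z (fz t) t i (hz t ht)).sub (derivComp x (fx t) t i (hx t ht))
  have hgc : ∀ i, ContinuousOn (g i) (Set.Icc 0 T) := fun i t ht =>
    ((hgd t ht i).continuousAt).continuousWithinAt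
  have hfc : ContinuousOn f (Set.Icc 0 T) := by
    intro t ht
    have h1 : ContinuousWithinAt (fun t => Finset.univ.sup' hne fun i => g i t)
        (Set.Icc 0 T) t :=
      Filter.Tendsto.finset_sup'_nhds_apply hne (fun i _ => hgc i t ht)
    exact h1.sup continuousWithinAt_const
  have hfnn : ∀ t, 0 ≤ f t := fun t => le_sup_right
  have hcover : ∀ s : ℝ, f s = 0 ∨ ∃ j, f s = g j s := by
    intro s
    rcases le_or_gt ((Finset.univ.sup' hne fun i => g i s)) 0 with h | h
    · left; simp only [hf]; exact sup_eq_right.mpr h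
    · right
      obtain ⟨j, -, hj⟩ := Finset.exists_mem_eq_sup' hne (fun i => g i s)
      exact ⟨j, by simp only [hf]; rw [sup_eq_left.mpr h.le, hj]⟩
  have hgle : ∀ s j, g j s ≤ f s := fun s j =>
    le_trans (Finset.le_sup' (fun i => g i s) (Finset.mem_univ j)) le_sup_left
  -- Gronwall
  have main : ∀ t ∈ Set.Icc (0:ℝ) T, f t ≤ gronwallBound 0 K 0 (t - 0) := by
    apply le_gronwallBound_of_liminf_deriv_right_le hfc _ _ (fun t _ => le_refl (K * f t + 0))
    · -- liminf condition with f' := fun t => K * f t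
      intro t ht r hr
      rw [add_zero] at hr
      have htT : t < T := ht.2
      have htIcc : t ∈ Set.Icc (0:ℝ) T := ⟨ht.1, htT.le⟩
      have hrpos : 0 < r := lt_of_le_of_lt (mul_nonneg hK (hfnn t)) hr
      set l : Filter ℝ := 𝓝[Set.Ioc t T] t with hl
      haveI hlne : l.NeBot := by
        rw [hl, ← mem_closure_iff_nhdsWithin_neBot, closure_Ioc htT.ne]
        exact ⟨le_refl t, htT.le⟩
      have hlgt : l ≤ 𝓝[>] t := nhdsWithin_mono _ Set.Ioc_subset_Ioi_self
      have hlIcc : l ≤ 𝓝[Set.Icc 0 T] t :=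
        nhdsWithin_mono _ (fun s hs => ⟨le_trans ht.1 hs.1.le, hs.2⟩)
      have hlne' : l ≤ 𝓝[≠] t :=
        nhdsWithin_mono _ (fun s hs => ne_of_gt hs.1)
      have hmem : ∀ᶠ s in l, s ∈ Set.Ioc t T := self_mem_nhdsWithin
      -- find a frequent "piece"
      have hpiece : (∃ᶠ s in l, f s = 0) ∨ ∃ j, ∃ᶠ s in l, f s = g j s := by
        by_contra hcon
        push_neg at hcon
        obtain ⟨h1, h2⟩ := hcon
        have h2' : ∀ᶠ s in l, ∀ j, ¬ f s = g j s :=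
          Filter.eventually_all.2 fun j => h2 j
        obtain ⟨s, hs1, hs2⟩ := (h1.and h2').exists
        rcases hcover s with h | ⟨j, h⟩
        · exact hs1 h
        · exact hs2 j h
      rcases hpiece with hfreq | ⟨j, hfreq⟩
      · -- frequently f = 0
        refine Filter.Frequently.filter_mono ?_ hlgt
        refine hfreq.mp (hmem.mono ?_)
        intro s hs hfs
        rw [hfs]
        have : (s - t)⁻¹ * (0 - f t) ≤ 0 := by
          apply mul_nonpos_of_nonneg_of_nonpos
          · exact le_of_lt (inv_pos.2 (by linarith [hs.1]))
          · linarith [hfnn t]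
        linarith
      · -- frequently f = g j
        have hftend : Filter.Tendsto f l (𝓝 (f t)) := (hfc t htIcc).mono_left hlIcc
        have hgtend : Filter.Tendsto (g j) l (𝓝 (g j t)) := (hgc j t htIcc).mono_left hlIcc
        have heq : g j t = f t :=
          tendsto_nhds_unique_of_frequently_eq hgtend hftend (hfreq.mono fun s hs => hs.symm)
        have hmax : ∀ j', g j' t ≤ g j t := fun j' => heq ▸ hgle t j'
        have hnn : 0 ≤ g j t := heq ▸ hfnn t
        have hDle : fz t j - fx t j ≤ K * (g j t) := key t htIcc j hnn hmax
        have hDr : fz t j - fx t j < r := lt_of_le_of_lt hDle (by rw [heq]; exact hr)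
        have hslope : Filter.Tendsto (slope (g j) t) l (𝓝 (fz t j - fx t j)) :=
          (hasDerivAt_iff_tendsto_slope.1 (hgd t htIcc j)).mono_left hlne'
        have hev : ∀ᶠ s in l, slope (g j) t s < r := hslope.eventually_lt_const hDr
        refine Filter.Frequently.filter_mono ?_ hlgt
        refine hfreq.mp ((hev.and hmem).mono ?_)
        intro s ⟨hs1, hs2⟩ hfs
        rw [hfs, ← heq]
        have : slope (g j) t s = (s - t)⁻¹ * (g j s - g j t) := by
          rw [slope_def_field]; ring
        rw [← this]; exact hs1
    · -- initial condition
      apply sup_le _ le_rfl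
      apply Finset.sup'_le
      intro i _
      simp only [hg]
      linarith [h0 i]
  intro t ht
  intro i
  have := main t ht
  rw [gronwallBound_ε0] at this
  simp only [zero_mul] at this
  have h2 := hgle t i
  simp only [hg] at h2
  linarith
section
variable {n m : ℕ} (wl wu : Fin m → ℝ) (F : (Fin n → ℝ) → (Fin m → ℝ) → (Fin n → ℝ))

lemma lipComp (K : NNReal)
    (hF : LipschitzWith K (fun p : (Fin n → ℝ) × (Fin m → ℝ) => F p.1 p.2))
    (a b : Fin n → ℝ) (w : Fin m → ℝ) (i : Fin n) (μ : ℝ) (hμ : dist a b ≤ μ) :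
    F a w i - F b w i ≤ K * μ := by
  have h1 : dist (F a w i) (F b w i) ≤ dist (F a w) (F b w) := dist_le_pi_dist _ _ i
  have h2 : dist (F a w) (F b w) ≤ K * dist (a, w) (b, w) := hF.dist_le_mul (a, w) (b, w)
  have h3 : dist ((a, w)) ((b, w)) = dist a b := by
    rw [Prod.dist_eq, dist_self]
    exact max_eq_left dist_nonneg
  have h4 : F a w i - F b w i ≤ |F a w i - F b w i| := le_abs_self _
  rw [← Real.dist_eq] at h4
  have hK : (0:ℝ) ≤ K := K.2
  calc F a w i - F b w i ≤ dist (F a w) (F b w) := le_trans h4 h1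
    _ ≤ K * dist a b := by rw [← h3]; exact h2
    _ ≤ K * μ := by apply mul_le_mul_of_nonneg_left _ hK; linarith [dist_nonneg (x := a) (y := b)]

lemma distShift (a : Fin n → ℝ) (μ : ℝ) (hμ : 0 ≤ μ) :
    dist (fun j => a j + μ) a ≤ μ := by
  rw [dist_pi_le_iff hμ]
  intro j
  rw [Real.dist_eq]
  simp [abs_of_nonneg hμ]

variable (hwlu : wl ≤ wu) (K : NNReal)
  (hF : LipschitzWith K (fun p : (Fin n → ℝ) × (Fin m → ℝ) => F p.1 p.2))
  (hmonox : ∀ (i j : Fin n), j ≠ i → ∀ (x : Fin n → ℝ) (s t : ℝ), s ≤ t →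
      ∀ w ∈ Set.Icc wl wu,
        F (Function.update x j s) w i ≤ F (Function.update x j t) w i)
  (hmonow : ∀ (i : Fin n) (k : Fin m), ∀ (x : Fin n → ℝ) (w : Fin m → ℝ) (s t : ℝ),
      wl k ≤ s → s ≤ t → t ≤ wu k →
        F x (Function.update w k s) i ≤ F x (Function.update w k t) i)
  (T : ℝ) (x : ℝ → Fin n → ℝ) (w : ℝ → Fin m → ℝ)
  (hw : ∀ t ∈ Set.Icc (0:ℝ) T, w t ∈ Set.Icc wl wu)
  (hx : ∀ t ∈ Set.Icc (0:ℝ) T, HasDerivAt x (F (x t) (w t)) t)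

include hwlu hF hmonox hmonow hw hx

lemma lowerComp (hn : 0 < n) (z : ℝ → Fin n → ℝ)
    (hz : ∀ t ∈ Set.Icc (0:ℝ) T, HasDerivAt z (F (z t) wl) t)
    (h0 : z 0 ≤ x 0) : ∀ t ∈ Set.Icc (0:ℝ) T, z t ≤ x t := by
  apply compCore hn T K K.2 x z (fun t => F (x t) (w t)) (fun t => F (z t) wl) hx hz _ h0
  intro t ht i hnn hmax
  set μ : ℝ := z t i - x t i with hμ
  set c : Fin n → ℝ := fun j => x t j + μ with hc
  have hwl : wl ∈ Set.Icc wl wu := ⟨le_rfl, hwlu⟩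
  have step1 : F (z t) wl i ≤ F c wl i := by
    apply monoAux (fun v => F v wl i) i
      (fun j hj x' s s' hss' => hmonox i j hj x' s s' hss' wl hwl)
    · intro j
      have := hmax j
      simp only [hc]
      linarith
    · simp only [hc, hμ]; ring
  have step2 : F c wl i ≤ F c (w t) i :=
    monoWAux wl wu (fun v => F c v i)
      (fun k x' s s' h1 h2 h3 => hmonow i k c x' s s' h1 h2 h3)
      wl (w t) hwl (hw t ht) (hw t ht).1
  have step3 : F c (w t) i - F (x t) (w t) i ≤ K * μ :=
    lipComp F K hF c (x t) (w t) i μ (distShift (x t) μ hnn)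
  linarith

lemma upperComp (hn : 0 < n) (zh : ℝ → Fin n → ℝ)
    (hzh : ∀ t ∈ Set.Icc (0:ℝ) T, HasDerivAt zh (F (zh t) wu) t)
    (h0 : x 0 ≤ zh 0) : ∀ t ∈ Set.Icc (0:ℝ) T, x t ≤ zh t := by
  apply compCore hn T K K.2 zh x (fun t => F (zh t) wu) (fun t => F (x t) (w t)) hzh hx _ h0
  intro t ht i hnn hmax
  set μ : ℝ := x t i - zh t i with hμ
  set c : Fin n → ℝ := fun j => zh t j + μ with hc
  have hwu : wu ∈ Set.Icc wl wu := ⟨hwlu, le_rfl⟩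
  have step1 : F (x t) (w t) i ≤ F c (w t) i := by
    apply monoAux (fun v => F v (w t) i) i
      (fun j hj x' s s' hss' => hmonox i j hj x' s s' hss' (w t) (hw t ht))
    · intro j
      have := hmax j
      simp only [hc]
      linarith
    · simp only [hc, hμ]; ring
  have step2 : F c (w t) i ≤ F c wu i :=
    monoWAux wl wu (fun v => F c v i)
      (fun k x' s s' h1 h2 h3 => hmonow i k c x' s s' h1 h2 h3)
      (w t) wu (hw t ht) hwu (hw t ht).2
  have step3 : F c wu i - F (zh t) wu i ≤ K * μ :=
    lipComp F K hF c (zh t) wu i μ (distShift (zh t) μ hnn)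
  linarith
end

/-- Corollary 2: for a monotone system, if `x_eq` is a globally
asymptotically stable equilibrium of `ẋ = F(x, w̲)` and `x̂_eq` one of `ẋ = F(x, w̄)`
with `x_eq ⪯ x̂_eq`, then `𝒳_eq = [x_eq, x̂_eq]` is robustly forward invariant and globally
attractive, and no hyperrectangle that is a proper subset of `𝒳_eq` is robustly forward
invariant. -/
theorem corollary2_monotone_systems
    {n m : ℕ} (wl wu : Fin m → ℝ) (hwlu : wl ≤ wu)
    (F : (Fin n → ℝ) → (Fin m → ℝ) → (Fin n → ℝ))
    (hFlip : ∃ K : NNReal, LipschitzWith K (fun p : (Fin n → ℝ) × (Fin m → ℝ) => F p.1 p.2))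
    -- the system is monotone: Fᵢ is nondecreasing in xⱼ for j ≠ i ...
    (hmonox : ∀ (i j : Fin n), j ≠ i → ∀ (x : Fin n → ℝ) (s t : ℝ), s ≤ t →
      ∀ w ∈ Set.Icc wl wu,
        F (Function.update x j s) w i ≤ F (Function.update x j t) w i)
    -- ... and Fᵢ is nondecreasing in every component of w
    (hmonow : ∀ (i : Fin n) (k : Fin m), ∀ (x : Fin n → ℝ) (w : Fin m → ℝ) (s t : ℝ),
      wl k ≤ s → s ≤ t → t ≤ wu k →
        F x (Function.update w k s) i ≤ F x (Function.update w k t) i)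
    (xeq xheq : Fin n → ℝ) (hle : xeq ≤ xheq)
    -- xeq and xheq are equilibria of ẋ = F(x, w̲) and ẋ = F(x, w̄) respectively
    (heql : F xeq wl = 0) (heqh : F xheq wu = 0)
    -- xeq is globally asymptotically stable for ẋ = F(x, w̲):
    (hstabl : ∀ U : Set (Fin n → ℝ), IsOpen U → xeq ∈ U →
      ∃ V : Set (Fin n → ℝ), IsOpen V ∧ xeq ∈ V ∧
        ∀ z : ℝ → (Fin n → ℝ), (∀ t ∈ Set.Ici (0:ℝ), HasDerivAt z (F (z t) wl) t) →
          z 0 ∈ V → ∀ t ∈ Set.Ici (0:ℝ), z t ∈ U)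
    (hexl : ∀ x0 : Fin n → ℝ, ∃ z : ℝ → (Fin n → ℝ),
      (∀ t ∈ Set.Ici (0:ℝ), HasDerivAt z (F (z t) wl) t) ∧ z 0 = x0)
    (hconvl : ∀ z : ℝ → (Fin n → ℝ), (∀ t ∈ Set.Ici (0:ℝ), HasDerivAt z (F (z t) wl) t) →
      Filter.Tendsto z Filter.atTop (nhds xeq))
    -- xheq is globally asymptotically stable for ẋ = F(x, w̄):
    (hstabh : ∀ U : Set (Fin n → ℝ), IsOpen U → xheq ∈ U →
      ∃ V : Set (Fin n → ℝ), IsOpen V ∧ xheq ∈ V ∧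
        ∀ z : ℝ → (Fin n → ℝ), (∀ t ∈ Set.Ici (0:ℝ), HasDerivAt z (F (z t) wu) t) →
          z 0 ∈ V → ∀ t ∈ Set.Ici (0:ℝ), z t ∈ U)
    (hexh : ∀ x0 : Fin n → ℝ, ∃ z : ℝ → (Fin n → ℝ),
      (∀ t ∈ Set.Ici (0:ℝ), HasDerivAt z (F (z t) wu) t) ∧ z 0 = x0)
    (hconvh : ∀ z : ℝ → (Fin n → ℝ), (∀ t ∈ Set.Ici (0:ℝ), HasDerivAt z (F (z t) wu) t) →
      Filter.Tendsto z Filter.atTop (nhds xheq)) :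
    -- 𝒳_eq is robustly forward invariant
    RobustlyForwardInvariant wl wu F (Set.Icc xeq xheq) ∧
    -- 𝒳_eq is globally attractive
    (∀ (x : ℝ → (Fin n → ℝ)) (w : ℝ → (Fin m → ℝ)),
      (∀ t ∈ Set.Ici (0:ℝ), w t ∈ Set.Icc wl wu) →
      PiecewiseContinuousOn w (Set.Ici 0) →
      (∀ t ∈ Set.Ici (0:ℝ), HasDerivAt x (F (x t) (w t)) t) →
      ∀ U : Set (Fin n → ℝ), IsOpen U → Set.Icc xeq xheq ⊆ U →
        ∃ T : ℝ, 0 < T ∧ ∀ t : ℝ, T ≤ t → x t ∈ U) ∧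
    -- no (nonempty) hyperrectangle that is a proper subset of 𝒳_eq is robustly forward invariant
    (∀ p q : Fin n → ℝ, p ≤ q → Set.Icc p q ⊆ Set.Icc xeq xheq →
      Set.Icc p q ≠ Set.Icc xeq xheq →
      ¬ RobustlyForwardInvariant wl wu F (Set.Icc p q)) := by
  obtain ⟨K, hF⟩ := hFlip
  -- Part 3: minimality (valid for every n)
  have part3 : ∀ p q : Fin n → ℝ, p ≤ q → Set.Icc p q ⊆ Set.Icc xeq xheq →
      Set.Icc p q ≠ Set.Icc xeq xheq →
      ¬ RobustlyForwardInvariant wl wu F (Set.Icc p q) := by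
    intro p q hpq hsub hne hRFI
    have hpmem : p ∈ Set.Icc xeq xheq := hsub ⟨le_rfl, hpq⟩
    have hqmem : q ∈ Set.Icc xeq xheq := hsub ⟨hpq, le_rfl⟩
    have hcases : p ≠ xeq ∨ q ≠ xheq := by
      by_contra h
      push_neg at h
      obtain ⟨h1, h2⟩ := h
      subst h1; subst h2
      exact hne rfl
    rcases hcases with hp | hq
    · obtain ⟨i, hi⟩ : ∃ i, xeq i < p i := by
        by_contra h
        push_neg at h
        exact hp (funext fun i => le_antisymm (h i) (hpmem.1 i))
      obtain ⟨z, hz, hz0⟩ := hexl p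
      have hconv := hconvl z hz
      have hev : ∀ᶠ t in Filter.atTop, dist (z t) xeq < (p i - xeq i) :=
        Metric.tendsto_nhds.mp hconv _ (by linarith)
      obtain ⟨T0, hT0⟩ := Filter.eventually_atTop.1 hev
      set T : ℝ := max T0 1 with hTdef
      have hTnn : (0:ℝ) ≤ T := le_trans zero_le_one (le_max_right _ _)
      have hzT := hT0 T (le_max_left _ _)
      have hlt : z T i < p i := by
        have h1 : dist (z T i) (xeq i) ≤ dist (z T) xeq := dist_le_pi_dist _ _ i
        rw [Real.dist_eq] at h1
        have := abs_lt.1 (lt_of_le_of_lt h1 hzT)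
        linarith [this.1, this.2]
      have hmem := hRFI T hTnn z (fun _ => wl) (fun t _ => ⟨le_rfl, hwlu⟩)
        ⟨∅, continuousOn_const⟩ (fun t ht => hz t ht.1)
        (by rw [hz0]; exact ⟨le_rfl, hpq⟩) T ⟨hTnn, le_rfl⟩
      exact absurd (hmem.1 i) (not_le.2 hlt)
    · obtain ⟨i, hi⟩ : ∃ i, q i < xheq i := by
        by_contra h
        push_neg at h
        exact hq (funext fun i => le_antisymm (hqmem.2 i) (h i))
      obtain ⟨z, hz, hz0⟩ := hexh q
      have hconv := hconvh z hz
      have hev : ∀ᶠ t in Filter.atTop, dist (z t) xheq < (xheq i - q i) :=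
        Metric.tendsto_nhds.mp hconv _ (by linarith)
      obtain ⟨T0, hT0⟩ := Filter.eventually_atTop.1 hev
      set T : ℝ := max T0 1 with hTdef
      have hTnn : (0:ℝ) ≤ T := le_trans zero_le_one (le_max_right _ _)
      have hzT := hT0 T (le_max_left _ _)
      have hlt : q i < z T i := by
        have h1 : dist (z T i) (xheq i) ≤ dist (z T) xheq := dist_le_pi_dist _ _ i
        rw [Real.dist_eq] at h1
        have := abs_lt.1 (lt_of_le_of_lt h1 hzT)
        linarith [this.1, this.2]
      have hmem := hRFI T hTnn z (fun _ => wu) (fun t _ => ⟨hwlu, le_rfl⟩)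
        ⟨∅, continuousOn_const⟩ (fun t ht => hz t ht.1)
        (by rw [hz0]; exact ⟨hpq, le_rfl⟩) T ⟨hTnn, le_rfl⟩
      exact absurd (hmem.2 i) (not_le.2 hlt)
  rcases Nat.eq_zero_or_pos n with hn0 | hn
  · -- degenerate case n = 0
    subst hn0
    have htriv : ∀ v : Fin 0 → ℝ, v ∈ Set.Icc xeq xheq := by
      intro v
      constructor <;> intro i <;> exact i.elim0
    refine ⟨?_, ?_, part3⟩
    · intro T hT x w hw hpw hx hx0 t ht
      exact htriv _
    · intro x w hw hpw hx U hU hsub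
      exact ⟨1, one_pos, fun t _ => hsub (htriv _)⟩
  · -- main case n > 0
    constructor
    · -- robust forward invariance
      intro T hT x w hw hpw hx hx0 t ht
      constructor
      · exact lowerComp wl wu F hwlu K hF hmonox hmonow T x w hw hx hn (fun _ => xeq)
          (fun s _ => by
            show HasDerivAt _ (F xeq wl) s
            rw [heql]
            exact hasDerivAt_const s xeq) hx0.1 t ht
      · exact upperComp wl wu F hwlu K hF hmonox hmonow T x w hw hx hn (fun _ => xheq)
          (fun s _ => by
            show HasDerivAt _ (F xheq wu) s
            rw [heqh]
            exact hasDerivAt_const s xheq) hx0.2 t ht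
    constructor
    · -- global attractivity
      intro x w hw hpw hx U hU hsub
      obtain ⟨z, hz, hz0⟩ := hexl (x 0)
      obtain ⟨zh, hzh, hzh0⟩ := hexh (x 0)
      have hcomp : ∀ t : ℝ, 0 ≤ t → z t ≤ x t ∧ x t ≤ zh t := by
        intro t ht
        constructor
        · exact lowerComp wl wu F hwlu K hF hmonox hmonow t x w
            (fun s hs => hw s hs.1) (fun s hs => hx s hs.1) hn z
            (fun s hs => hz s hs.1) hz0.le t ⟨ht, le_rfl⟩
        · exact upperComp wl wu F hwlu K hF hmonox hmonow t x w
            (fun s hs => hw s hs.1) (fun s hs => hx s hs.1) hn zh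
            (fun s hs => hzh s hs.1) hzh0.ge t ⟨ht, le_rfl⟩
      have hKc : IsCompact (Set.Icc xeq xheq) := isCompact_Icc
      obtain ⟨ε, hε, hthick⟩ := hKc.exists_thickening_subset_open hU hsub
      have h1 : ∀ᶠ t in Filter.atTop, dist (z t) xeq < ε :=
        Metric.tendsto_nhds.mp (hconvl z hz) _ hε
      have h2 : ∀ᶠ t in Filter.atTop, dist (zh t) xheq < ε :=
        Metric.tendsto_nhds.mp (hconvh zh hzh) _ hε
      obtain ⟨T0, hT0⟩ := Filter.eventually_atTop.1 (h1.and h2)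
      refine ⟨max T0 1, lt_of_lt_of_le one_pos (le_max_right _ _), ?_⟩
      intro t htT
      have ht0 : (0:ℝ) ≤ t := le_trans (le_trans zero_le_one (le_max_right _ _)) htT
      obtain ⟨hd1, hd2⟩ := hT0 t (le_trans (le_max_left _ _) htT)
      obtain ⟨hzx, hxzh⟩ := hcomp t ht0
      apply hthick
      rw [Metric.mem_thickening_iff]
      refine ⟨fun i => max (xeq i) (min (x t i) (xheq i)),
        ⟨fun i => le_max_left _ _, fun i => max_le (hle i) (min_le_right _ _)⟩, ?_⟩
      rw [dist_pi_lt_iff hε]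
      intro i
      rw [Real.dist_eq]
      have hz' : |z t i - xeq i| < ε := by
        have := dist_le_pi_dist (z t) xeq i
        rw [Real.dist_eq] at this
        exact lt_of_le_of_lt this hd1
      have hzh' : |zh t i - xheq i| < ε := by
        have := dist_le_pi_dist (zh t) xheq i
        rw [Real.dist_eq] at this
        exact lt_of_le_of_lt this hd2
      have habs1 := abs_lt.1 hz'
      have habs2 := abs_lt.1 hzh'
      have hzxi := hzx i
      have hxzhi := hxzh i
      rcases lt_or_ge (x t i) (xeq i) with hc1 | hc1
      · have hmin : min (x t i) (xheq i) = x t i := min_eq_left (le_trans hc1.le (hle i))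
        have hmax : max (xeq i) (x t i) = xeq i := max_eq_left hc1.le
        rw [hmin, hmax, abs_lt]
        constructor <;> linarith [habs1.1, habs1.2]
      · rcases le_or_gt (x t i) (xheq i) with hc2 | hc2
        · have hmin : min (x t i) (xheq i) = x t i := min_eq_left hc2
          have hmax : max (xeq i) (x t i) = x t i := max_eq_right hc1
          rw [hmin, hmax, sub_self, abs_zero]
          exact hε
        · have hmin : min (x t i) (xheq i) = xheq i := min_eq_right hc2.le
          have hmax : max (xeq i) (xheq i) = xheq i := max_eq_right (hle i)
          rw [hmin, hmax, abs_lt]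
          constructor <;> linarith [habs2.1, habs2.2]
    · exact part3
end
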